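/- In a multiplicity-free semi-simple tensor system over a commutative ring R, let λ, ν ∈ I be such that ν acts one-dimensionally on the left and on the right of λ, and N_{λλ}^ν = 1. Suppose d ∈ R is a unit with d^{-2} = (F^{λλλ}_{φ^l_ν(λ)})^ν_ν (F̄^{λλλ}_{φ^l_ν(λ)})^ν_ν and also d^{-2} = (F^{λλλ}_{φ^r_ν(λ)})^ν_ν (F̄^{λλλ}_{φ^r_ν(λ)})^ν_ν. Then on the Hilbert space H_{λ̃} with λ̃ = (λ,…,λ) the operators U_i = d p_i^{(ν)} (1 ≤ i ≤ L−1) satisfy the Temperley–Lieb relations: U_i^2 = d U_i for 1 ≤ i ≤ L−1; U_i U_j = U_j U_i whenever i + 2 ≤ j ≤ L−1; and U_i U_{i±1} U_i = U_i whenever 1 ≤ i, i±1 ≤ L−1. -/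

import Mathlib

open scoped Classical

noncomputable section

open Fin.NatCast

/-- A multiplicity-free semi-simple tensor system over a commutative ring `R`,
with index set `I`, fusion constants `N`, and F-moves `F`, `Fbar`.
`F a b c d e f` denotes `(F^{abc}_d)^e_f` and `Fbar a b c d f e` denotes `(F̄^{abc}_d)^f_e`. -/
structure TensorSystem (R : Type*) [CommRing R] (I : Type*) where
  N : I → I → I → ℕ
  F : I → I → I → I → I → I → R
  Fbar : I → I → I → I → I → I → R
  N_le_one : ∀ a b c, N a b c ≤ 1
  N_assoc : ∀ a b c d, (∑ᶠ e, N a b e * N e c d) = ∑ᶠ e, N a e d * N b c e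
  N_finite : ∀ a b, (Function.support fun c => N a b c).Finite
  F_vanish : ∀ a b c d e f, N a b e * N b c f * N a f d * N e c d = 0 → F a b c d e f = 0
  Fbar_vanish : ∀ a b c d e f, N a b e * N b c f * N a f d * N e c d = 0 → Fbar a b c d f e = 0
  pentagon : ∀ a b c d e f g k l,
      (∑ᶠ h, F a b c g f h * F a h d e g k * F b c d k h l) = F f c d e g l * F a b l e f k
  F_Fbar : ∀ a b c d e e',
      (∑ᶠ f, F a b c d e f * Fbar a b c d f e')
        = (if e = e' then (1 : R) else 0) * (N a b e : R) * (N e c d : R)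
  Fbar_F : ∀ a b c d f f',
      (∑ᶠ e, Fbar a b c d f' e * F a b c d e f)
        = (if f = f' then (1 : R) else 0) * (N b c f : R) * (N a f d : R)

namespace TensorSystem

variable {R : Type*} [CommRing R] {I : Type*}

open Fin.NatCast

/-- `μ = (μ₀, μ₁, …, μ_L)` is a fusion path for the tuple `λ̃ = (lam 1, …, lam L)`:
`μ₀ ∈ I0` and `N_{μ_{i-1} λ_i}^{μ_i} = 1` for `1 ≤ i ≤ L`. -/
def IsPath (TS : TensorSystem R I) (L : ℕ) (I0 : Set I) (lam : ℕ → I)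
    (μ : Fin (L + 1) → I) : Prop :=
  μ 0 ∈ I0 ∧ ∀ i : ℕ, 1 ≤ i → i ≤ L →
    TS.N (μ ((i - 1 : ℕ) : Fin (L + 1))) (lam i) (μ ((i : ℕ) : Fin (L + 1))) = 1

/-- Matrix element `⟨μ'| p_i^{(ν)} |μ⟩` of the two-site projection operator. -/
def pMat (TS : TensorSystem R I) (L : ℕ) (lam : ℕ → I) (i : ℕ) (ν : I)
    (μ' μ : Fin (L + 1) → I) : R :=
  (∏ j ∈ Finset.univ.erase ((i : ℕ) : Fin (L + 1)), if μ j = μ' j then (1 : R) else 0)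
    * TS.Fbar (μ ((i - 1 : ℕ) : Fin (L + 1))) (lam i) (lam (i + 1))
        (μ ((i + 1 : ℕ) : Fin (L + 1))) ν (μ' ((i : ℕ) : Fin (L + 1)))
    * TS.F (μ ((i - 1 : ℕ) : Fin (L + 1))) (lam i) (lam (i + 1))
        (μ ((i + 1 : ℕ) : Fin (L + 1))) (μ ((i : ℕ) : Fin (L + 1))) ν

/-- Matrix elements of the composition of two operators on `H_{λ̃}`,
summing over the fusion-path basis. -/
def mulMat (TS : TensorSystem R I) (L : ℕ) (I0 : Set I) (lam : ℕ → I)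
    (A B : (Fin (L + 1) → I) → (Fin (L + 1) → I) → R)
    (μ' μ : Fin (L + 1) → I) : R :=
  ∑ᶠ μ'' ∈ {x : Fin (L + 1) → I | TS.IsPath L I0 lam x}, A μ' μ'' * B μ'' μ

/-- Two operators on `H_{λ̃}` are equal iff all their matrix elements between
fusion-path basis vectors agree. -/
def MatEqOn (TS : TensorSystem R I) (L : ℕ) (I0 : Set I) (lam : ℕ → I)
    (A B : (Fin (L + 1) → I) → (Fin (L + 1) → I) → R) : Prop :=
  ∀ μ' μ : Fin (L + 1) → I, TS.IsPath L I0 lam μ' → TS.IsPath L I0 lam μ → A μ' μ = B μ' μ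

/-- Extended fusion numbers `N_{a a₁ ⋯ aₙ}^b` along a list `[a₁, …, aₙ]`. -/
def Nseq (TS : TensorSystem R I) : I → List I → I → ℕ
  | a, [], b => if a = b then 1 else 0
  | a, c :: rest, b => ∑ᶠ x, TS.N a c x * Nseq TS x rest b

/-- `ν` acts one-dimensionally on the left of `μ`. -/
def ActsOneDimLeft (TS : TensorSystem R I) (ν μ : I) : Prop :=
  (∑ᶠ μ' : I, TS.N ν μ μ') = 1

/-- `ν` acts one-dimensionally on the right of `μ`. -/
def ActsOneDimRight (TS : TensorSystem R I) (ν μ : I) : Prop :=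
  (∑ᶠ μ' : I, TS.N μ ν μ') = 1

end TensorSystem

/-- Matrix elements of the identity operator. -/
def deltaMat {R : Type*} [CommRing R] {I : Type*} (L : ℕ)
    (μ' μ : Fin (L + 1) → I) : R :=
  ∏ j : Fin (L + 1), if μ j = μ' j then (1 : R) else 0

/-- Scalar multiple of a matrix of operator matrix elements. -/
def smulMat {R : Type*} [CommRing R] {α : Sort*} (c : R) (A : α → α → R) : α → α → R :=
  fun x y => c * A x y




section Helpers

open Function

variable {R : Type*} [CommRing R] {I : Type*}

lemma cast_N_mul {n : ℕ} (hle : n ≤ 1) {r : R} (h : n = 0 → r = 0) : (n : R) * r = r := by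
  interval_cases n
  · simp [h rfl]
  · simp

lemma nat_finsum_unique {f : I → ℕ} (hfin : (Function.support f).Finite)
    (hsum : ∑ᶠ x, f x = 1) {e e' : I} (he : f e ≠ 0) (he' : f e' ≠ 0) : e = e' := by
  by_contra hne
  rw [finsum_eq_sum f hfin] at hsum
  have hsub : ({e, e'} : Finset I) ⊆ hfin.toFinset := by
    intro x hx
    simp only [Finset.mem_insert, Finset.mem_singleton] at hx
    rcases hx with rfl | rfl <;> simp [Set.Finite.mem_toFinset, Function.mem_support, he, he']
  have h2 : f e + f e' ≤ ∑ x ∈ hfin.toFinset, f x := by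
    calc f e + f e' = ∑ x ∈ ({e, e'} : Finset I), f x := (Finset.sum_pair hne).symm
    _ ≤ _ := Finset.sum_le_sum_of_subset hsub
  omega

lemma nat_finsum_le {f : I → ℕ} (hfin : (Function.support f).Finite) (e : I) :
    f e ≤ ∑ᶠ x, f x := by
  rw [finsum_eq_sum f hfin]
  by_cases he : f e = 0
  · simp [he]
  · exact Finset.single_le_sum (fun _ _ => Nat.zero_le _)
      (by simp [Set.Finite.mem_toFinset, Function.mem_support, he])

lemma finsum_eq_finset_sum (f : I → R) (s : Finset I) (h : ∀ x, f x ≠ 0 → x ∈ s) :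
    ∑ᶠ x, f x = ∑ x ∈ s, f x :=
  finsum_eq_finset_sum_of_support_subset f (fun x hx => h x hx)

/-- a product of indicator-deltas equals the indicator of the conjunction. -/
lemma prod_ite_eq_ite {α : Type*} (s : Finset α) (P : α → Prop) :
    (∏ j ∈ s, if P j then (1 : R) else 0) = if ∀ j ∈ s, P j then (1 : R) else 0 := by
  induction s using Finset.induction_on with
  | empty => simp
  | @insert a s ha ih =>
      rw [Finset.prod_insert ha, ih]
      by_cases h1 : P a
      · by_cases h2 : ∀ j ∈ s, P j
        · simp [h1, h2, fun j hj => h2 j hj]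
        · have : ¬ ∀ j ∈ insert a s, P j := by
            intro hall; exact h2 fun j hj => hall j (Finset.mem_insert_of_mem hj)
          simp [h1, h2, this]
      · have : ¬ ∀ j ∈ insert a s, P j := by
          intro hall; exact h1 (hall a (Finset.mem_insert_self a s))
        simp [h1, this]

lemma mul_sum_mul {α : Type*} (s : Finset α) (A B : R) (f : α → R) :
    A * (∑ h ∈ s, f h) * B = ∑ h ∈ s, A * f h * B := by
  rw [Finset.mul_sum, Finset.sum_mul]

end Helpers

namespace TensorSystem

open Function

variable {R : Type*} [CommRing R] {I : Type*} (TS : TensorSystem R I)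

lemma F_ne_cond {a b c d e f : I} (h : TS.F a b c d e f ≠ 0) :
    TS.N a b e = 1 ∧ TS.N b c f = 1 ∧ TS.N a f d = 1 ∧ TS.N e c d = 1 := by
  have h4 : TS.N a b e * TS.N b c f * TS.N a f d * TS.N e c d ≠ 0 :=
    fun h0 => h (TS.F_vanish _ _ _ _ _ _ h0)
  simp only [Nat.mul_ne_zero_iff] at h4
  obtain ⟨⟨⟨h1, h2⟩, h3⟩, h4⟩ := h4
  have b1 := TS.N_le_one a b e; have b2 := TS.N_le_one b c f
  have b3 := TS.N_le_one a f d; have b4 := TS.N_le_one e c d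
  exact ⟨by omega, by omega, by omega, by omega⟩

lemma Fbar_ne_cond {a b c d e f : I} (h : TS.Fbar a b c d f e ≠ 0) :
    TS.N a b e = 1 ∧ TS.N b c f = 1 ∧ TS.N a f d = 1 ∧ TS.N e c d = 1 := by
  have h4 : TS.N a b e * TS.N b c f * TS.N a f d * TS.N e c d ≠ 0 :=
    fun h0 => h (TS.Fbar_vanish _ _ _ _ _ _ h0)
  simp only [Nat.mul_ne_zero_iff] at h4
  obtain ⟨⟨⟨h1, h2⟩, h3⟩, h4⟩ := h4
  have b1 := TS.N_le_one a b e; have b2 := TS.N_le_one b c f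
  have b3 := TS.N_le_one a f d; have b4 := TS.N_le_one e c d
  exact ⟨by omega, by omega, by omega, by omega⟩

lemma Fz1 {a b e : I} (h : TS.N a b e = 0) (c d f : I) : TS.F a b c d e f = 0 :=
  TS.F_vanish _ _ _ _ _ _ (by simp [h])
lemma Fz2 {b c f : I} (h : TS.N b c f = 0) (a d e : I) : TS.F a b c d e f = 0 :=
  TS.F_vanish _ _ _ _ _ _ (by simp [h])
lemma Fz3 {a f d : I} (h : TS.N a f d = 0) (b c e : I) : TS.F a b c d e f = 0 :=
  TS.F_vanish _ _ _ _ _ _ (by simp [h])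
lemma Fz4 {e c d : I} (h : TS.N e c d = 0) (a b f : I) : TS.F a b c d e f = 0 :=
  TS.F_vanish _ _ _ _ _ _ (by simp [h])
lemma Fbarz1 {a b e : I} (h : TS.N a b e = 0) (c d f : I) : TS.Fbar a b c d f e = 0 :=
  TS.Fbar_vanish _ _ _ _ _ _ (by simp [h])
lemma Fbarz2 {b c f : I} (h : TS.N b c f = 0) (a d e : I) : TS.Fbar a b c d f e = 0 :=
  TS.Fbar_vanish _ _ _ _ _ _ (by simp [h])
lemma Fbarz3 {a f d : I} (h : TS.N a f d = 0) (b c e : I) : TS.Fbar a b c d f e = 0 :=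
  TS.Fbar_vanish _ _ _ _ _ _ (by simp [h])
lemma Fbarz4 {e c d : I} (h : TS.N e c d = 0) (a b f : I) : TS.Fbar a b c d f e = 0 :=
  TS.Fbar_vanish _ _ _ _ _ _ (by simp [h])

/-- uniqueness of the fusion product when `ν` acts one-dimensionally. -/
lemma one_dim_unique {x y : I} (hone : (∑ᶠ z, TS.N x y z) = 1) {t e : I}
    (ht : TS.N x y t = 1) (he : TS.N x y e ≠ 0) : e = t :=
  nat_finsum_unique (TS.N_finite x y) hone he (by simp [ht])

end TensorSystem

namespace TensorSystem

section Core

open Function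

variable {R : Type*} [CommRing R] {I : Type*} (TS : TensorSystem R I)
variable (lam0 ν t₀ : I)
variable (hνν : TS.N lam0 lam0 ν = 1)
variable (honeL : (∑ᶠ z, TS.N ν lam0 z) = 1) (honeR : (∑ᶠ z, TS.N lam0 ν z) = 1)
variable (hl : TS.N ν lam0 t₀ = 1) (hr : TS.N lam0 ν t₀ = 1)

include honeL hl in
lemma uniqL {e : I} (he : TS.N ν lam0 e ≠ 0) : e = t₀ :=
  TS.one_dim_unique honeL hl he

include honeR hr in
lemma uniqR {e : I} (he : TS.N lam0 ν e ≠ 0) : e = t₀ :=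
  TS.one_dim_unique honeR hr he

include honeL hl in
lemma N_assoc_l {a c b : I} (h1 : TS.N a ν c = 1) (h2 : TS.N c lam0 b = 1) :
    TS.N a t₀ b = 1 := by
  have hA := TS.N_assoc a ν lam0 b
  have hR : (∑ᶠ e, TS.N a e b * TS.N ν lam0 e) = TS.N a t₀ b := by
    rw [finsum_eq_single _ t₀ ?_, hl, mul_one]
    intro x hx
    by_cases h : TS.N ν lam0 x = 0
    · simp [h]
    · exact absurd (TS.uniqL lam0 ν t₀ honeL hl h) hx
  have hfin : (Function.support fun e => TS.N a ν e * TS.N e lam0 b).Finite := by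
    apply (TS.N_finite a ν).subset
    intro x hx
    simp only [Function.mem_support] at hx ⊢
    exact fun h0 => hx (by simp [h0])
  have hle := nat_finsum_le hfin c
  rw [h1, h2] at hle
  rw [hA, hR] at hle
  have := TS.N_le_one a t₀ b
  omega

include honeR hr in
lemma N_assoc_r {a c b : I} (h1 : TS.N a lam0 c = 1) (h2 : TS.N c ν b = 1) :
    TS.N a t₀ b = 1 := by
  have hA := TS.N_assoc a lam0 ν b
  have hR : (∑ᶠ e, TS.N a e b * TS.N lam0 ν e) = TS.N a t₀ b := by
    rw [finsum_eq_single _ t₀ ?_, hr, mul_one]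
    intro x hx
    by_cases h : TS.N lam0 ν x = 0
    · simp [h]
    · exact absurd (TS.uniqR lam0 ν t₀ honeR hr h) hx
  have hfin : (Function.support fun e => TS.N a lam0 e * TS.N e ν b).Finite := by
    apply (TS.N_finite a lam0).subset
    intro x hx
    simp only [Function.mem_support] at hx ⊢
    exact fun h0 => hx (by simp [h0])
  have hle := nat_finsum_le hfin c
  rw [h1, h2] at hle
  rw [hA, hR] at hle
  have := TS.N_le_one a t₀ b
  omega

include honeR hr in
/-- collapsed orthogonality for the system `(a, λ, ν, b)` whose `f`-index is unique. -/
lemma ortho_lnu (a b e e' : I) :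
    TS.F a lam0 ν b e t₀ * TS.Fbar a lam0 ν b t₀ e'
      = (if e = e' then (1 : R) else 0) * (TS.N a lam0 e : R) * (TS.N e ν b : R) := by
  have h := TS.F_Fbar a lam0 ν b e e'
  rwa [finsum_eq_single _ t₀ ?_] at h
  intro x hx
  by_cases h0 : TS.N lam0 ν x = 0
  · rw [TS.Fz2 h0, zero_mul]
  · exact absurd (TS.uniqR lam0 ν t₀ honeR hr h0) hx

include honeL hl in
/-- collapsed orthogonality for the system `(a, ν, λ, b)` whose `f`-index is unique. -/
lemma ortho_nul (a b e e' : I) :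
    TS.F a ν lam0 b e t₀ * TS.Fbar a ν lam0 b t₀ e'
      = (if e = e' then (1 : R) else 0) * (TS.N a ν e : R) * (TS.N e lam0 b : R) := by
  have h := TS.F_Fbar a ν lam0 b e e'
  rwa [finsum_eq_single _ t₀ ?_] at h
  intro x hx
  by_cases h0 : TS.N ν lam0 x = 0
  · rw [TS.Fz2 h0, zero_mul]
  · exact absurd (TS.uniqL lam0 ν t₀ honeL hl h0) hx

end Core

end TensorSystem

namespace TensorSystem

section Core2

open Function

variable {R : Type*} [CommRing R] {I : Type*} (TS : TensorSystem R I)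
variable (lam0 ν t₀ : I)
variable (hνν : TS.N lam0 lam0 ν = 1)
variable (honeL : (∑ᶠ z, TS.N ν lam0 z) = 1) (honeR : (∑ᶠ z, TS.N lam0 ν z) = 1)
variable (hl : TS.N ν lam0 t₀ = 1) (hr : TS.N lam0 ν t₀ = 1)

lemma Zgen (a b c h'' t : I) :
    (∑ᶠ y, TS.Fbar a lam0 lam0 c h'' y * (TS.F y lam0 lam0 b c ν * TS.F a lam0 ν b y t))
      = TS.F a h'' lam0 b c t * TS.F lam0 lam0 lam0 t h'' ν := by
  classical
  set sy := (TS.N_finite a lam0).toFinset with hsy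
  set sh := (TS.N_finite lam0 lam0).toFinset with hsh
  have memy : ∀ y : I, TS.N a lam0 y ≠ 0 → y ∈ sy := by
    intro y hy; rw [hsy, Set.Finite.mem_toFinset]; exact hy
  have memh : ∀ h : I, TS.N lam0 lam0 h ≠ 0 → h ∈ sh := by
    intro h hh; rw [hsh, Set.Finite.mem_toFinset]; exact hh
  have step1 : (∑ᶠ y, TS.Fbar a lam0 lam0 c h'' y *
        (TS.F y lam0 lam0 b c ν * TS.F a lam0 ν b y t))
      = ∑ y ∈ sy, TS.Fbar a lam0 lam0 c h'' y *
        (TS.F y lam0 lam0 b c ν * TS.F a lam0 ν b y t) := by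
    apply finsum_eq_finset_sum
    intro y hy
    apply memy
    intro h0
    exact hy (by rw [TS.Fbarz1 h0, zero_mul])
  rw [step1]
  have step2 : ∀ y : I, TS.F y lam0 lam0 b c ν * TS.F a lam0 ν b y t
      = ∑ h ∈ sh, TS.F a lam0 lam0 c y h * TS.F a h lam0 b c t
          * TS.F lam0 lam0 lam0 t h ν := by
    intro y
    rw [← TS.pentagon a lam0 lam0 lam0 b y c t ν]
    apply finsum_eq_finset_sum
    intro h hne
    apply memh
    intro h0
    exact hne (by rw [TS.Fz1 h0, mul_zero])
  calc ∑ y ∈ sy, TS.Fbar a lam0 lam0 c h'' y *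
        (TS.F y lam0 lam0 b c ν * TS.F a lam0 ν b y t)
      = ∑ y ∈ sy, ∑ h ∈ sh, TS.Fbar a lam0 lam0 c h'' y *
          (TS.F a lam0 lam0 c y h * TS.F a h lam0 b c t * TS.F lam0 lam0 lam0 t h ν) := by
        refine Finset.sum_congr rfl fun y _ => ?_
        rw [step2 y, Finset.mul_sum]
    _ = ∑ h ∈ sh, (∑ y ∈ sy, TS.Fbar a lam0 lam0 c h'' y * TS.F a lam0 lam0 c y h) *
          (TS.F a h lam0 b c t * TS.F lam0 lam0 lam0 t h ν) := by
        rw [Finset.sum_comm]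
        refine Finset.sum_congr rfl fun h _ => ?_
        rw [Finset.sum_mul]
        exact Finset.sum_congr rfl fun y _ => by ring
    _ = ∑ h ∈ sh, ((if h = h'' then (1:R) else 0) * (TS.N lam0 lam0 h : R) * (TS.N a h c : R)) *
          (TS.F a h lam0 b c t * TS.F lam0 lam0 lam0 t h ν) := by
        refine Finset.sum_congr rfl fun h _ => ?_
        congr 1
        rw [← TS.Fbar_F a lam0 lam0 c h h'']
        symm
        apply finsum_eq_finset_sum
        intro y hy
        apply memy
        intro h0
        exact hy (by rw [TS.Fbarz1 h0, zero_mul])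
    _ = TS.F a h'' lam0 b c t * TS.F lam0 lam0 lam0 t h'' ν := by
        rw [Finset.sum_eq_single h'']
        · by_cases hA : TS.N lam0 lam0 h'' = 0
          · rw [TS.Fz1 hA]; simp [hA]
          · have hA1 : TS.N lam0 lam0 h'' = 1 := by have := TS.N_le_one lam0 lam0 h''; omega
            by_cases hB : TS.N a h'' c = 0
            · rw [TS.Fz1 hB]; simp [hB]
            · have hB1 : TS.N a h'' c = 1 := by have := TS.N_le_one a h'' c; omega
              simp [hA1, hB1]
        · intro h _ hne; simp [hne]
        · intro hmem
          have h0 : TS.N lam0 lam0 h'' = 0 := by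
            by_contra h0; exact hmem (memh _ h0)
          simp [h0]

end Core2

end TensorSystem

namespace TensorSystem

section Core3

open Function

variable {R : Type*} [CommRing R] {I : Type*} (TS : TensorSystem R I)
variable (lam0 ν t₀ : I)
variable (hνν : TS.N lam0 lam0 ν = 1)
variable (honeL : (∑ᶠ z, TS.N ν lam0 z) = 1) (honeR : (∑ᶠ z, TS.N lam0 ν z) = 1)
variable (hl : TS.N ν lam0 t₀ = 1) (hr : TS.N lam0 ν t₀ = 1)

include honeR hr in
lemma W1 (a b c h x : I) :
    TS.Fbar a lam0 lam0 c h x * TS.F x lam0 lam0 b c ν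
      = TS.F a h lam0 b c t₀ * TS.F lam0 lam0 lam0 t₀ h ν * TS.Fbar a lam0 ν b t₀ x := by
  classical
  set sy := insert x (TS.N_finite a lam0).toFinset with hsy
  have memy : ∀ y : I, TS.N a lam0 y ≠ 0 → y ∈ sy := by
    intro y hy; rw [hsy]; exact Finset.mem_insert_of_mem (by rwa [Set.Finite.mem_toFinset])
  have key : ∀ y : I, TS.Fbar a lam0 lam0 c h y * TS.F y lam0 lam0 b c ν *
        ((if y = x then (1:R) else 0) * (TS.N a lam0 y : R) * (TS.N y ν b : R))
      = TS.Fbar a lam0 lam0 c h y * (TS.F y lam0 lam0 b c ν * TS.F a lam0 ν b y t₀)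
          * TS.Fbar a lam0 ν b t₀ x := by
    intro y
    rw [← TS.ortho_lnu lam0 ν t₀ honeR hr a b y x]
    ring
  have collapse : ∑ y ∈ sy, TS.Fbar a lam0 lam0 c h y * TS.F y lam0 lam0 b c ν *
        ((if y = x then (1:R) else 0) * (TS.N a lam0 y : R) * (TS.N y ν b : R))
      = TS.Fbar a lam0 lam0 c h x * TS.F x lam0 lam0 b c ν := by
    rw [Finset.sum_eq_single x]
    · by_cases hA : TS.N a lam0 x = 0
      · rw [TS.Fbarz1 hA]; simp [hA]
      · have hA1 : TS.N a lam0 x = 1 := by have := TS.N_le_one a lam0 x; omega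
        by_cases hB : TS.N x ν b = 0
        · rw [TS.Fz3 hB]; simp [hB]
        · have hB1 : TS.N x ν b = 1 := by have := TS.N_le_one x ν b; omega
          simp [hA1, hB1]
    · intro y _ hne; simp [hne]
    · intro hmem; exact absurd (Finset.mem_insert_self x _) hmem
  rw [← collapse]
  calc ∑ y ∈ sy, TS.Fbar a lam0 lam0 c h y * TS.F y lam0 lam0 b c ν *
        ((if y = x then (1:R) else 0) * (TS.N a lam0 y : R) * (TS.N y ν b : R))
      = (∑ y ∈ sy, TS.Fbar a lam0 lam0 c h y *
          (TS.F y lam0 lam0 b c ν * TS.F a lam0 ν b y t₀)) * TS.Fbar a lam0 ν b t₀ x := by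
        rw [Finset.sum_mul]
        exact Finset.sum_congr rfl fun y _ => key y
    _ = TS.F a h lam0 b c t₀ * TS.F lam0 lam0 lam0 t₀ h ν * TS.Fbar a lam0 ν b t₀ x := by
        congr 1
        rw [← TS.Zgen lam0 ν a b c h t₀]
        symm
        apply finsum_eq_finset_sum
        intro y hy
        apply memy
        intro h0
        exact hy (by rw [TS.Fbarz1 h0, zero_mul])

end Core3

end TensorSystem

namespace TensorSystem

section Core4

open Function

variable {R : Type*} [CommRing R] {I : Type*} (TS : TensorSystem R I)
variable (lam0 ν t₀ : I)

lemma sum4_comm {α : Type*} (s1 s2 s3 s4 : Finset α) (f : α → α → α → α → R) :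
    (∑ k ∈ s1, ∑ l ∈ s2, ∑ y ∈ s3, ∑ g ∈ s4, f k l y g)
      = ∑ y ∈ s3, ∑ g ∈ s4, ∑ k ∈ s1, ∑ l ∈ s2, f k l y g := by
  calc (∑ k ∈ s1, ∑ l ∈ s2, ∑ y ∈ s3, ∑ g ∈ s4, f k l y g)
      = ∑ k ∈ s1, ∑ y ∈ s3, ∑ l ∈ s2, ∑ g ∈ s4, f k l y g :=
        Finset.sum_congr rfl fun k _ => Finset.sum_comm
    _ = ∑ y ∈ s3, ∑ k ∈ s1, ∑ l ∈ s2, ∑ g ∈ s4, f k l y g := Finset.sum_comm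
    _ = ∑ y ∈ s3, ∑ k ∈ s1, ∑ g ∈ s4, ∑ l ∈ s2, f k l y g :=
        Finset.sum_congr rfl fun y _ => Finset.sum_congr rfl fun k _ => Finset.sum_comm
    _ = ∑ y ∈ s3, ∑ g ∈ s4, ∑ k ∈ s1, ∑ l ∈ s2, f k l y g :=
        Finset.sum_congr rfl fun y _ => Finset.sum_comm

variable (hνν : TS.N lam0 lam0 ν = 1)
variable (honeL : (∑ᶠ z, TS.N ν lam0 z) = 1) (honeR : (∑ᶠ z, TS.N lam0 ν z) = 1)
variable (hl : TS.N ν lam0 t₀ = 1) (hr : TS.N lam0 ν t₀ = 1)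

include hνν honeL hl hr in
lemma LA (a b c : I) (h1 : TS.N a ν c = 1) (h2 : TS.N c lam0 b = 1) :
    (∑ᶠ y, TS.F a lam0 lam0 c y ν * TS.Fbar y lam0 lam0 b ν c * TS.Fbar a lam0 ν b t₀ y)
      = TS.Fbar a ν lam0 b t₀ c * TS.Fbar lam0 lam0 lam0 t₀ ν ν := by
  classical
  have hat : TS.N a t₀ b = 1 := TS.N_assoc_l lam0 ν t₀ honeL hl h1 h2
  set sy := (TS.N_finite a lam0).toFinset with hsy
  set sl := (TS.N_finite lam0 lam0).toFinset with hsl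
  set sk := (TS.N_finite ν lam0).toFinset with hsk
  set sg := sy.biUnion (fun y => (TS.N_finite y lam0).toFinset) ∪ {c} with hsg
  have memy : ∀ y : I, TS.N a lam0 y ≠ 0 → y ∈ sy := fun y hy => by
    rw [hsy, Set.Finite.mem_toFinset]; exact hy
  have meml : ∀ l : I, TS.N lam0 lam0 l ≠ 0 → l ∈ sl := fun l hL => by
    rw [hsl, Set.Finite.mem_toFinset]; exact hL
  have memk : ∀ k : I, TS.N ν lam0 k ≠ 0 → k ∈ sk := fun k hk => by
    rw [hsk, Set.Finite.mem_toFinset]; exact hk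
  have memg : ∀ y ∈ sy, ∀ g : I, TS.N y lam0 g ≠ 0 → g ∈ sg := by
    intro y hy g hg
    rw [hsg]
    exact Finset.mem_union_left _
      (Finset.mem_biUnion.2 ⟨y, hy, by rwa [Set.Finite.mem_toFinset]⟩)
  have hcg : c ∈ sg := by rw [hsg]; exact Finset.mem_union_right _ (by simp)
  have hνl : ν ∈ sl := meml ν (by rw [hνν]; exact one_ne_zero)
  have htk : t₀ ∈ sk := memk t₀ (by rw [hl]; exact one_ne_zero)
  set Φ : I → I → I → I → R := fun k l y g =>
    TS.Fbar a ν lam0 b k c * TS.Fbar lam0 lam0 lam0 k l ν *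
      (TS.F y lam0 lam0 b g l * TS.F a lam0 l b y k) *
      (TS.Fbar y lam0 lam0 b ν g * TS.Fbar a lam0 ν b t₀ y) with hΦ
  -- Evaluation I (k, l outermost)
  have Ykl : ∀ k l : I, (∑ y ∈ sy, ∑ g ∈ sg,
        (TS.F y lam0 lam0 b g l * TS.F a lam0 l b y k) *
          (TS.Fbar y lam0 lam0 b ν g * TS.Fbar a lam0 ν b t₀ y))
      = (if l = ν then (1:R) else 0) * (if k = t₀ then (1:R) else 0) := by
    intro k l
    have hg : ∀ y ∈ sy, (∑ g ∈ sg,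
          (TS.F y lam0 lam0 b g l * TS.F a lam0 l b y k) *
            (TS.Fbar y lam0 lam0 b ν g * TS.Fbar a lam0 ν b t₀ y))
        = (TS.F a lam0 l b y k * TS.Fbar a lam0 ν b t₀ y) *
            ((if l = ν then (1:R) else 0) * (TS.N lam0 lam0 l : R) * (TS.N y l b : R)) := by
      intro y hy
      have hre : ∀ g : I, (TS.F y lam0 lam0 b g l * TS.F a lam0 l b y k) *
            (TS.Fbar y lam0 lam0 b ν g * TS.Fbar a lam0 ν b t₀ y)
          = (TS.F a lam0 l b y k * TS.Fbar a lam0 ν b t₀ y) *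
              (TS.Fbar y lam0 lam0 b ν g * TS.F y lam0 lam0 b g l) := fun g => by ring
      rw [Finset.sum_congr rfl fun g _ => hre g, ← Finset.mul_sum]
      congr 1
      rw [← TS.Fbar_F y lam0 lam0 b l ν]
      symm; apply finsum_eq_finset_sum
      intro g hgne
      refine memg y hy g fun h0 => ?_
      exact hgne (by rw [TS.Fbarz1 h0, zero_mul])
    rw [Finset.sum_congr rfl hg]
    by_cases hlν : l = ν
    · rw [hlν]
      have hterm : ∀ y : I, (TS.F a lam0 ν b y k * TS.Fbar a lam0 ν b t₀ y) *
            ((if ν = ν then (1:R) else 0) * (TS.N lam0 lam0 ν : R) * (TS.N y ν b : R))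
          = TS.Fbar a lam0 ν b t₀ y * TS.F a lam0 ν b y k := by
        intro y
        by_cases hyb : TS.N y ν b = 0
        · rw [TS.Fz4 hyb]; simp [hyb]
        · have hyb1 : TS.N y ν b = 1 := by have := TS.N_le_one y ν b; omega
          rw [if_pos rfl, hνν, hyb1]; push_cast; ring
      rw [Finset.sum_congr rfl fun y _ => hterm y]
      have hax := TS.Fbar_F a lam0 ν b k t₀
      rw [show (∑ y ∈ sy, TS.Fbar a lam0 ν b t₀ y * TS.F a lam0 ν b y k)
          = ∑ᶠ y, TS.Fbar a lam0 ν b t₀ y * TS.F a lam0 ν b y k from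
        (finsum_eq_finset_sum _ _ fun y hy => memy y fun h0 =>
          hy (by rw [TS.Fbarz1 h0, zero_mul])).symm, hax]
      by_cases hk : k = t₀
      · rw [hk]; simp [hr, hat]
      · simp [hk]
    · rw [if_neg hlν, zero_mul, zero_mul]
      exact Finset.sum_eq_zero (fun y _ => by ring)
  have EI : (∑ k ∈ sk, ∑ l ∈ sl, ∑ y ∈ sy, ∑ g ∈ sg, Φ k l y g)
      = TS.Fbar a ν lam0 b t₀ c * TS.Fbar lam0 lam0 lam0 t₀ ν ν := by
    have pull : ∀ k l : I, (∑ y ∈ sy, ∑ g ∈ sg, Φ k l y g)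
        = TS.Fbar a ν lam0 b k c * TS.Fbar lam0 lam0 lam0 k l ν *
            ((if l = ν then (1:R) else 0) * (if k = t₀ then (1:R) else 0)) := by
      intro k l
      rw [← Ykl k l, Finset.mul_sum]
      refine Finset.sum_congr rfl fun y _ => ?_
      rw [Finset.mul_sum]
      exact Finset.sum_congr rfl fun g _ => by rw [hΦ]; ring
    rw [Finset.sum_congr rfl fun k _ => Finset.sum_congr rfl fun l _ => pull k l]
    rw [Finset.sum_congr rfl fun k (_ : k ∈ sk) => Finset.sum_eq_single ν
      (fun l _ hlν => by rw [if_neg hlν]; simp)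
      (fun hν => absurd hνl hν)]
    rw [Finset.sum_eq_single t₀
      (fun k _ hkt => by rw [if_neg hkt]; simp)
      (fun ht => absurd htk ht)]
    simp
  -- Evaluation II (y, g outermost)
  have pent : ∀ y g k l : I, TS.F y lam0 lam0 b g l * TS.F a lam0 l b y k
      = ∑ h ∈ sl, TS.F a lam0 lam0 g y h * TS.F a h lam0 b g k
          * TS.F lam0 lam0 lam0 k h l := by
    intro y g k l
    rw [← TS.pentagon a lam0 lam0 lam0 b y g k l]
    apply finsum_eq_finset_sum
    intro h hh
    refine meml h fun h0 => ?_
    exact hh (by rw [TS.Fz2 h0, zero_mul, zero_mul])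
  have Θ : ∀ y g : I, (∑ k ∈ sk, ∑ l ∈ sl, Φ k l y g)
      = ((if g = c then (1:R) else 0) * (TS.N a ν g : R) * (TS.N g lam0 b : R)) *
          (TS.F a lam0 lam0 g y ν *
            (TS.Fbar y lam0 lam0 b ν g * TS.Fbar a lam0 ν b t₀ y)) := by
    intro y g
    have hKin : ∀ k : I, (∑ l ∈ sl, Φ k l y g)
        = TS.Fbar a ν lam0 b k c * (TS.F a lam0 lam0 g y ν * TS.F a ν lam0 b g k) *
            (TS.N ν lam0 k : R) *
            (TS.Fbar y lam0 lam0 b ν g * TS.Fbar a lam0 ν b t₀ y) := by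
      intro k
      have e1 : ∀ l : I, Φ k l y g
          = ∑ h ∈ sl, (TS.Fbar a ν lam0 b k c *
                (TS.Fbar y lam0 lam0 b ν g * TS.Fbar a lam0 ν b t₀ y) *
                (TS.F a lam0 lam0 g y h * TS.F a h lam0 b g k)) *
              (TS.F lam0 lam0 lam0 k h l * TS.Fbar lam0 lam0 lam0 k l ν) := by
        intro l
        simp only [hΦ]
        rw [pent y g k l, mul_sum_mul]
        exact Finset.sum_congr rfl fun h _ => by ring
      rw [Finset.sum_congr rfl fun l _ => e1 l, Finset.sum_comm]
      have e2 : ∀ h : I, (∑ l ∈ sl, (TS.Fbar a ν lam0 b k c *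
              (TS.Fbar y lam0 lam0 b ν g * TS.Fbar a lam0 ν b t₀ y) *
              (TS.F a lam0 lam0 g y h * TS.F a h lam0 b g k)) *
            (TS.F lam0 lam0 lam0 k h l * TS.Fbar lam0 lam0 lam0 k l ν))
          = (TS.Fbar a ν lam0 b k c *
              (TS.Fbar y lam0 lam0 b ν g * TS.Fbar a lam0 ν b t₀ y) *
              (TS.F a lam0 lam0 g y h * TS.F a h lam0 b g k)) *
              ((if h = ν then (1:R) else 0) * (TS.N lam0 lam0 h : R) * (TS.N h lam0 k : R)) := by
        intro h
        rw [← Finset.mul_sum]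
        congr 1
        rw [← TS.F_Fbar lam0 lam0 lam0 k h ν]
        symm; apply finsum_eq_finset_sum
        intro l hL
        refine meml l fun h0 => ?_
        exact hL (by rw [TS.Fz2 h0, zero_mul])
      rw [Finset.sum_congr rfl fun h _ => e2 h]
      rw [Finset.sum_eq_single ν (fun h _ hhν => by rw [if_neg hhν]; simp)
        (fun hν => absurd hνl hν)]
      rw [if_pos rfl, hνν]
      push_cast
      ring
    rw [Finset.sum_congr rfl fun k _ => hKin k]
    rw [Finset.sum_eq_single t₀ ?_ (fun ht => absurd htk ht)]
    · rw [hl]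
      have := TS.ortho_nul lam0 ν t₀ honeL hl a b g c
      push_cast
      calc TS.Fbar a ν lam0 b t₀ c * (TS.F a lam0 lam0 g y ν * TS.F a ν lam0 b g t₀) * 1 *
            (TS.Fbar y lam0 lam0 b ν g * TS.Fbar a lam0 ν b t₀ y)
          = (TS.F a ν lam0 b g t₀ * TS.Fbar a ν lam0 b t₀ c) *
              (TS.F a lam0 lam0 g y ν *
                (TS.Fbar y lam0 lam0 b ν g * TS.Fbar a lam0 ν b t₀ y)) := by ring
        _ = _ := by rw [this]
    · intro k hk hkt
      exact absurd (TS.uniqL lam0 ν t₀ honeL hl (by rwa [hsk, Set.Finite.mem_toFinset] at hk))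
        hkt
  calc (∑ᶠ y, TS.F a lam0 lam0 c y ν * TS.Fbar y lam0 lam0 b ν c * TS.Fbar a lam0 ν b t₀ y)
      = ∑ y ∈ sy, TS.F a lam0 lam0 c y ν * TS.Fbar y lam0 lam0 b ν c *
          TS.Fbar a lam0 ν b t₀ y := by
        apply finsum_eq_finset_sum
        intro y hy
        refine memy y fun h0 => ?_
        exact hy (by rw [TS.Fz1 h0, zero_mul, zero_mul])
    _ = ∑ y ∈ sy, ∑ g ∈ sg, ∑ k ∈ sk, ∑ l ∈ sl, Φ k l y g := by
        refine Finset.sum_congr rfl fun y _ => ?_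
        rw [Finset.sum_congr rfl fun g (_ : g ∈ sg) => Θ y g]
        rw [Finset.sum_eq_single c ?_ (fun hc => absurd hcg hc)]
        · rw [if_pos rfl, h1, h2]; push_cast; ring
        · intro g _ hgc; rw [if_neg hgc]; simp
    _ = ∑ k ∈ sk, ∑ l ∈ sl, ∑ y ∈ sy, ∑ g ∈ sg, Φ k l y g := (sum4_comm sk sl sy sg Φ).symm
    _ = TS.Fbar a ν lam0 b t₀ c * TS.Fbar lam0 lam0 lam0 t₀ ν ν := EI

end Core4

end TensorSystem

namespace TensorSystem

section Core5

open Function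

variable {R : Type*} [CommRing R] {I : Type*} (TS : TensorSystem R I)
variable (lam0 ν t₀ : I)
variable (hνν : TS.N lam0 lam0 ν = 1)
variable (honeL : (∑ᶠ z, TS.N ν lam0 z) = 1) (honeR : (∑ᶠ z, TS.N lam0 ν z) = 1)
variable (hl : TS.N ν lam0 t₀ = 1) (hr : TS.N lam0 ν t₀ = 1)

include hνν honeL honeR hl hr in
/-- the key pointwise identity (inverse-pentagon consequence). -/
lemma Mnu (a b c x : I) :
    TS.F a lam0 lam0 c x ν * TS.Fbar x lam0 lam0 b ν c
      = TS.Fbar a ν lam0 b t₀ c * TS.Fbar lam0 lam0 lam0 t₀ ν ν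
          * TS.F a lam0 ν b x t₀ := by
  classical
  by_cases h1 : TS.N a ν c = 1
  on_goal 2 =>
    have h10 : TS.N a ν c = 0 := by have := TS.N_le_one a ν c; omega
    rw [TS.Fz3 h10, TS.Fbarz1 h10, zero_mul, zero_mul, zero_mul]
  by_cases h2 : TS.N c lam0 b = 1
  on_goal 2 =>
    have h20 : TS.N c lam0 b = 0 := by have := TS.N_le_one c lam0 b; omega
    rw [TS.Fbarz4 h20, TS.Fbarz4 h20, mul_zero, zero_mul, zero_mul]
  -- main case
  set sy := insert x (TS.N_finite a lam0).toFinset with hsy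
  have memy : ∀ y : I, TS.N a lam0 y ≠ 0 → y ∈ sy := by
    intro y hy; rw [hsy]; exact Finset.mem_insert_of_mem (by rwa [Set.Finite.mem_toFinset])
  have key : ∀ y : I, (TS.F a lam0 lam0 c y ν * TS.Fbar y lam0 lam0 b ν c) *
        ((if x = y then (1:R) else 0) * (TS.N a lam0 x : R) * (TS.N x ν b : R))
      = ((TS.F a lam0 lam0 c y ν * TS.Fbar y lam0 lam0 b ν c) * TS.Fbar a lam0 ν b t₀ y)
          * TS.F a lam0 ν b x t₀ := by
    intro y
    rw [← TS.ortho_lnu lam0 ν t₀ honeR hr a b x y]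
    ring
  have collapse : (∑ y ∈ sy, (TS.F a lam0 lam0 c y ν * TS.Fbar y lam0 lam0 b ν c) *
        ((if x = y then (1:R) else 0) * (TS.N a lam0 x : R) * (TS.N x ν b : R)))
      = TS.F a lam0 lam0 c x ν * TS.Fbar x lam0 lam0 b ν c := by
    rw [Finset.sum_eq_single x]
    · by_cases hA : TS.N a lam0 x = 0
      · rw [TS.Fz1 hA]; simp [hA]
      · have hA1 : TS.N a lam0 x = 1 := by have := TS.N_le_one a lam0 x; omega
        by_cases hB : TS.N x ν b = 0
        · rw [TS.Fbarz3 hB]; simp [hB]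
        · have hB1 : TS.N x ν b = 1 := by have := TS.N_le_one x ν b; omega
          simp [hA1, hB1]
    · intro y _ hne; simp [Ne.symm hne]
    · intro hmem; exact absurd (Finset.mem_insert_self x _) hmem
  rw [← collapse]
  calc (∑ y ∈ sy, (TS.F a lam0 lam0 c y ν * TS.Fbar y lam0 lam0 b ν c) *
        ((if x = y then (1:R) else 0) * (TS.N a lam0 x : R) * (TS.N x ν b : R)))
      = (∑ y ∈ sy, TS.F a lam0 lam0 c y ν * TS.Fbar y lam0 lam0 b ν c *
          TS.Fbar a lam0 ν b t₀ y) * TS.F a lam0 ν b x t₀ := by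
        rw [Finset.sum_mul]
        exact Finset.sum_congr rfl fun y _ => key y
    _ = TS.Fbar a ν lam0 b t₀ c * TS.Fbar lam0 lam0 lam0 t₀ ν ν * TS.F a lam0 ν b x t₀ := by
        congr 1
        rw [← TS.LA lam0 ν t₀ hνν honeL hl hr a b c h1 h2]
        symm
        apply finsum_eq_finset_sum
        intro y hy
        refine memy y fun h0 => ?_
        exact hy (by rw [TS.Fz1 h0, zero_mul, zero_mul])

include hνν in
/-- the relation-1 orthogonality sum. -/
lemma rel1_sum (a c : I) :
    (∑ᶠ x, TS.F a lam0 lam0 c x ν * TS.Fbar a lam0 lam0 c ν x) = (TS.N a ν c : R) := by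
  classical
  have hax := TS.Fbar_F a lam0 lam0 c ν ν
  rw [if_pos rfl, hνν] at hax
  calc (∑ᶠ x, TS.F a lam0 lam0 c x ν * TS.Fbar a lam0 lam0 c ν x)
      = ∑ᶠ x, TS.Fbar a lam0 lam0 c ν x * TS.F a lam0 lam0 c x ν :=
        finsum_congr fun x => by ring
    _ = (TS.N a ν c : R) := by rw [hax]; push_cast; ring

end Core5

end TensorSystem

namespace TensorSystem

section Core6

open Function

variable {R : Type*} [CommRing R] {I : Type*} (TS : TensorSystem R I)
variable (lam0 ν t₀ : I)
variable (hl : TS.N ν lam0 t₀ = 1) (hr : TS.N lam0 ν t₀ = 1)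

include hr in
lemma relT_sum_r (a b : I) :
    (∑ᶠ x, TS.F a lam0 ν b x t₀ * TS.Fbar a lam0 ν b t₀ x) = (TS.N a t₀ b : R) := by
  have hax := TS.Fbar_F a lam0 ν b t₀ t₀
  rw [if_pos rfl, hr] at hax
  calc (∑ᶠ x, TS.F a lam0 ν b x t₀ * TS.Fbar a lam0 ν b t₀ x)
      = ∑ᶠ x, TS.Fbar a lam0 ν b t₀ x * TS.F a lam0 ν b x t₀ :=
        finsum_congr fun x => by ring
    _ = (TS.N a t₀ b : R) := by rw [hax]; push_cast; ring

include hl in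
lemma relT_sum_l (a b : I) :
    (∑ᶠ x, TS.F a ν lam0 b x t₀ * TS.Fbar a ν lam0 b t₀ x) = (TS.N a t₀ b : R) := by
  have hax := TS.Fbar_F a ν lam0 b t₀ t₀
  rw [if_pos rfl, hl] at hax
  calc (∑ᶠ x, TS.F a ν lam0 b x t₀ * TS.Fbar a ν lam0 b t₀ x)
      = ∑ᶠ x, TS.Fbar a ν lam0 b t₀ x * TS.F a ν lam0 b x t₀ :=
        finsum_congr fun x => by ring
    _ = (TS.N a t₀ b : R) := by rw [hax]; push_cast; ring

end Core6

end TensorSystem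

section FinCast

variable {L : ℕ}

lemma fcast_val {m : ℕ} (hm : m ≤ L) : (((m : ℕ) : Fin (L + 1)) : ℕ) = m := by
  have : m < L + 1 := by omega
  simp [Fin.val_natCast, Nat.mod_eq_of_lt this]

lemma fcast_ne {m n : ℕ} (hm : m ≤ L) (hn : n ≤ L) (h : m ≠ n) :
    ((m : ℕ) : Fin (L + 1)) ≠ ((n : ℕ) : Fin (L + 1)) := by
  intro he
  apply h
  have := congrArg (Fin.val) he
  rwa [fcast_val hm, fcast_val hn] at this

end FinCast

namespace TensorSystem

section Chain

open Function

variable {R : Type*} [CommRing R] {I : Type*} (TS : TensorSystem R I)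
variable (L : ℕ) (I0 : Set I) (lam0 ν : I)

lemma pMat_eq (i : ℕ) (μ' μ : Fin (L + 1) → I) :
    TS.pMat L (fun _ => lam0) i ν μ' μ
      = (if ∀ j ∈ Finset.univ.erase ((i : ℕ) : Fin (L + 1)), μ j = μ' j
            then (1 : R) else 0)
        * TS.Fbar (μ ((i - 1 : ℕ) : Fin (L + 1))) lam0 lam0
            (μ ((i + 1 : ℕ) : Fin (L + 1))) ν (μ' ((i : ℕ) : Fin (L + 1)))
        * TS.F (μ ((i - 1 : ℕ) : Fin (L + 1))) lam0 lam0
            (μ ((i + 1 : ℕ) : Fin (L + 1))) (μ ((i : ℕ) : Fin (L + 1))) ν := by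
  rw [pMat, prod_ite_eq_ite]
  congr

lemma path_step {μ : Fin (L + 1) → I} (hμ : TS.IsPath L I0 (fun _ => lam0) μ)
    {j : ℕ} (h1 : 1 ≤ j) (h2 : j ≤ L) :
    TS.N (μ ((j - 1 : ℕ) : Fin (L + 1))) lam0 (μ ((j : ℕ) : Fin (L + 1))) = 1 :=
  hμ.2 j h1 h2

lemma path_update {μ' : Fin (L + 1) → I} (hμ' : TS.IsPath L I0 (fun _ => lam0) μ')
    {i : ℕ} (hi1 : 1 ≤ i) (hi2 : i + 1 ≤ L) {x : I}
    (hx1 : TS.N (μ' ((i - 1 : ℕ) : Fin (L + 1))) lam0 x = 1)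
    (hx2 : TS.N x lam0 (μ' ((i + 1 : ℕ) : Fin (L + 1))) = 1) :
    TS.IsPath L I0 (fun _ => lam0) (Function.update μ' ((i : ℕ) : Fin (L + 1)) x) := by
  constructor
  · have h0 : (0 : Fin (L + 1)) ≠ ((i : ℕ) : Fin (L + 1)) := by
      have : ((0 : ℕ) : Fin (L + 1)) ≠ ((i : ℕ) : Fin (L + 1)) :=
        fcast_ne (by omega) (by omega) (by omega)
      simpa using this
    rw [Function.update_of_ne h0]
    exact hμ'.1
  · intro j hj1 hj2
    by_cases hji : j = i
    · subst hji
      have hm : ((j - 1 : ℕ) : Fin (L + 1)) ≠ ((j : ℕ) : Fin (L + 1)) :=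
        fcast_ne (by omega) (by omega) (by omega)
      rw [Function.update_of_ne hm, Function.update_self]
      exact hx1
    · by_cases hjp : j = i + 1
      · subst hjp
        have he : ((i + 1 - 1 : ℕ) : Fin (L + 1)) = ((i : ℕ) : Fin (L + 1)) := by norm_num
        have hp : ((i + 1 : ℕ) : Fin (L + 1)) ≠ ((i : ℕ) : Fin (L + 1)) :=
          fcast_ne (by omega) (by omega) (by omega)
        rw [he, Function.update_self, Function.update_of_ne hp]
        exact hx2
      · have hm : ((j - 1 : ℕ) : Fin (L + 1)) ≠ ((i : ℕ) : Fin (L + 1)) :=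
          fcast_ne (by omega) (by omega) (by omega)
        have hj : ((j : ℕ) : Fin (L + 1)) ≠ ((i : ℕ) : Fin (L + 1)) :=
          fcast_ne (by omega) (by omega) (by omega)
        rw [Function.update_of_ne hm, Function.update_of_ne hj]
        exact hμ'.2 j hj1 hj2

lemma pMat_ne_forall {i : ℕ} {μ' μ'' : Fin (L + 1) → I}
    (h : TS.pMat L (fun _ => lam0) i ν μ' μ'' ≠ 0) :
    ∀ j, j ≠ ((i : ℕ) : Fin (L + 1)) → μ'' j = μ' j := by
  rw [TS.pMat_eq L lam0 ν i] at h
  intro j hj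
  by_contra hne
  apply h
  rw [if_neg, zero_mul, zero_mul]
  intro hall
  exact hne (hall j (Finset.mem_erase.2 ⟨hj, Finset.mem_univ j⟩))

lemma pMat_ne_eq_update {i : ℕ} {μ' μ'' : Fin (L + 1) → I}
    (h : TS.pMat L (fun _ => lam0) i ν μ' μ'' ≠ 0) :
    μ'' = Function.update μ' ((i : ℕ) : Fin (L + 1)) (μ'' ((i : ℕ) : Fin (L + 1))) := by
  funext j
  by_cases hj : j = ((i : ℕ) : Fin (L + 1))
  · subst hj; rw [Function.update_self]
  · rw [Function.update_of_ne hj]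
    exact TS.pMat_ne_forall L lam0 ν h j hj

lemma pMat_ne_path {i : ℕ} {μ' μ'' : Fin (L + 1) → I}
    (hμ' : TS.IsPath L I0 (fun _ => lam0) μ') (hi1 : 1 ≤ i) (hi2 : i + 1 ≤ L)
    (h : TS.pMat L (fun _ => lam0) i ν μ' μ'' ≠ 0) :
    TS.IsPath L I0 (fun _ => lam0) μ'' := by
  have hupd := TS.pMat_ne_eq_update L lam0 ν h
  have him : ((i - 1 : ℕ) : Fin (L + 1)) ≠ ((i : ℕ) : Fin (L + 1)) :=
    fcast_ne (by omega) (by omega) (by omega)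
  have hip : ((i + 1 : ℕ) : Fin (L + 1)) ≠ ((i : ℕ) : Fin (L + 1)) :=
    fcast_ne (by omega) (by omega) (by omega)
  have hF : TS.F (μ'' ((i - 1 : ℕ) : Fin (L + 1))) lam0 lam0
      (μ'' ((i + 1 : ℕ) : Fin (L + 1))) (μ'' ((i : ℕ) : Fin (L + 1))) ν ≠ 0 := by
    rw [TS.pMat_eq L lam0 ν i] at h
    intro h0
    exact h (by rw [h0, mul_zero])
  obtain ⟨hc1, _, _, hc4⟩ := TS.F_ne_cond hF
  rw [TS.pMat_ne_forall L lam0 ν h _ him] at hc1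
  rw [TS.pMat_ne_forall L lam0 ν h _ hip] at hc4
  rw [hupd]
  exact TS.path_update L I0 lam0 hμ' hi1 hi2 hc1 hc4

lemma update_inj (μ' : Fin (L + 1) → I) (j : Fin (L + 1)) :
    Function.Injective (fun x : I => Function.update μ' j x) := by
  intro x y hxy
  have := congrFun hxy j
  simpa [Function.update_self] using this

/-- the collapse lemma for composing a projector with anything. -/
lemma mul_collapse {i : ℕ} (e : R) (B : (Fin (L + 1) → I) → (Fin (L + 1) → I) → R)
    {μ' : Fin (L + 1) → I} (μ : Fin (L + 1) → I)
    (hμ' : TS.IsPath L I0 (fun _ => lam0) μ') (hi1 : 1 ≤ i) (hi2 : i + 1 ≤ L) :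
    TS.mulMat L I0 (fun _ => lam0)
        (smulMat e (TS.pMat L (fun _ => lam0) i ν)) B μ' μ
      = ∑ᶠ x : I,
          (e * TS.pMat L (fun _ => lam0) i ν μ'
            (Function.update μ' ((i : ℕ) : Fin (L + 1)) x))
          * B (Function.update μ' ((i : ℕ) : Fin (L + 1)) x) μ := by
  classical
  set f : (Fin (L + 1) → I) → R := fun μ'' =>
    (e * TS.pMat L (fun _ => lam0) i ν μ' μ'') * B μ'' μ with hf
  have hsupp : ∀ μ'', f μ'' ≠ 0 → TS.pMat L (fun _ => lam0) i ν μ' μ'' ≠ 0 := by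
    intro μ'' h h0
    exact h (by rw [hf]; simp [h0])
  have hpath : Function.support f ⊆ {x | TS.IsPath L I0 (fun _ => lam0) x} := by
    intro μ'' h
    exact TS.pMat_ne_path L I0 lam0 ν hμ' hi1 hi2 (hsupp μ'' h)
  have hrange : ∀ μ'', f μ'' ≠ 0 →
      μ'' ∈ Set.range (fun x : I => Function.update μ' ((i : ℕ) : Fin (L + 1)) x) := by
    intro μ'' h
    exact ⟨μ'' ((i : ℕ) : Fin (L + 1)), (TS.pMat_ne_eq_update L lam0 ν (hsupp μ'' h)).symm⟩
  calc TS.mulMat L I0 (fun _ => lam0)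
        (smulMat e (TS.pMat L (fun _ => lam0) i ν)) B μ' μ
      = ∑ᶠ μ'' ∈ {x | TS.IsPath L I0 (fun _ => lam0) x}, f μ'' := rfl
    _ = ∑ᶠ μ'', f μ'' := by
        rw [finsum_mem_def, Set.indicator_eq_self.2 hpath]
    _ = ∑ᶠ x : I, f (Function.update μ' ((i : ℕ) : Fin (L + 1)) x) := by
        have h1 : (∑ᶠ μ'' ∈ Set.range
              (fun x : I => Function.update μ' ((i : ℕ) : Fin (L + 1)) x), f μ'')
            = ∑ᶠ x : I, f (Function.update μ' ((i : ℕ) : Fin (L + 1)) x) :=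
          finsum_mem_range (update_inj L μ' ((i : ℕ) : Fin (L + 1)))
        have h2 : (∑ᶠ μ'', f μ'')
            = ∑ᶠ μ'' ∈ Set.range
                (fun x : I => Function.update μ' ((i : ℕ) : Fin (L + 1)) x), f μ'' := by
          rw [← finsum_mem_univ f]
          apply finsum_mem_inter_support_eq
          ext μ''
          constructor
          · rintro ⟨-, hs⟩
            exact ⟨hrange μ'' hs, hs⟩
          · rintro ⟨-, hs⟩
            exact ⟨trivial, hs⟩
        rw [h2, h1]
    _ = _ := rfl

end Chain

end TensorSystem

namespace TensorSystem

section Rels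

open Function

variable {R : Type*} [CommRing R] {I : Type*} (TS : TensorSystem R I)
variable (L : ℕ) (I0 : Set I) (lam0 ν : I)

lemma forall_erase_update {i : ℕ} (μ μ' : Fin (L + 1) → I) (x : I) :
    (∀ j ∈ Finset.univ.erase ((i : ℕ) : Fin (L + 1)),
        μ j = Function.update μ' ((i : ℕ) : Fin (L + 1)) x j)
      ↔ ∀ j ∈ Finset.univ.erase ((i : ℕ) : Fin (L + 1)), μ j = μ' j := by
  constructor <;> intro h j hj <;>
    have hje : j ≠ ((i : ℕ) : Fin (L + 1)) := (Finset.mem_erase.1 hj).1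
  · have := h j hj
    rwa [Function.update_of_ne hje] at this
  · rw [Function.update_of_ne hje]
    exact h j hj

lemma pMat_apply_out {i : ℕ} (hi1 : 1 ≤ i) (hi2 : i + 1 ≤ L)
    (μ' : Fin (L + 1) → I) (x : I) :
    TS.pMat L (fun _ => lam0) i ν μ' (Function.update μ' ((i : ℕ) : Fin (L + 1)) x)
      = TS.Fbar (μ' ((i - 1 : ℕ) : Fin (L + 1))) lam0 lam0
          (μ' ((i + 1 : ℕ) : Fin (L + 1))) ν (μ' ((i : ℕ) : Fin (L + 1)))
        * TS.F (μ' ((i - 1 : ℕ) : Fin (L + 1))) lam0 lam0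
          (μ' ((i + 1 : ℕ) : Fin (L + 1))) x ν := by
  have hm : ((i - 1 : ℕ) : Fin (L + 1)) ≠ ((i : ℕ) : Fin (L + 1)) :=
    fcast_ne (by omega) (by omega) (by omega)
  have hp : ((i + 1 : ℕ) : Fin (L + 1)) ≠ ((i : ℕ) : Fin (L + 1)) :=
    fcast_ne (by omega) (by omega) (by omega)
  rw [TS.pMat_eq, if_pos, Function.update_of_ne hm, Function.update_of_ne hp,
    Function.update_self, one_mul]
  intro j hj
  rw [Function.update_of_ne (Finset.mem_erase.1 hj).1]

lemma rel1 (hνν : TS.N lam0 lam0 ν = 1) {i : ℕ} (hi1 : 1 ≤ i) (hi2 : i + 1 ≤ L) (e : R)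
    {μ' : Fin (L + 1) → I} (μ : Fin (L + 1) → I)
    (hμ' : TS.IsPath L I0 (fun _ => lam0) μ') :
    TS.mulMat L I0 (fun _ => lam0) (smulMat e (TS.pMat L (fun _ => lam0) i ν))
        (smulMat e (TS.pMat L (fun _ => lam0) i ν)) μ' μ
      = smulMat e (smulMat e (TS.pMat L (fun _ => lam0) i ν)) μ' μ := by
  classical
  have hm : ((i - 1 : ℕ) : Fin (L + 1)) ≠ ((i : ℕ) : Fin (L + 1)) :=
    fcast_ne (by omega) (by omega) (by omega)
  have hp : ((i + 1 : ℕ) : Fin (L + 1)) ≠ ((i : ℕ) : Fin (L + 1)) :=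
    fcast_ne (by omega) (by omega) (by omega)
  have hmm : ((i - 1 : ℕ) : Fin (L + 1)) ∈ Finset.univ.erase ((i : ℕ) : Fin (L + 1)) :=
    Finset.mem_erase.2 ⟨hm, Finset.mem_univ _⟩
  have hpm : ((i + 1 : ℕ) : Fin (L + 1)) ∈ Finset.univ.erase ((i : ℕ) : Fin (L + 1)) :=
    Finset.mem_erase.2 ⟨hp, Finset.mem_univ _⟩
  rw [TS.mul_collapse L I0 lam0 ν e _ μ hμ' hi1 hi2]
  simp only [smulMat]
  by_cases hagree : ∀ j ∈ Finset.univ.erase ((i : ℕ) : Fin (L + 1)), μ j = μ' j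
  · -- agreeing case
    have hμim : μ ((i - 1 : ℕ) : Fin (L + 1)) = μ' ((i - 1 : ℕ) : Fin (L + 1)) :=
      hagree _ hmm
    have hμip : μ ((i + 1 : ℕ) : Fin (L + 1)) = μ' ((i + 1 : ℕ) : Fin (L + 1)) :=
      hagree _ hpm
    have hsummand : ∀ x : I,
        (e * TS.pMat L (fun _ => lam0) i ν μ'
            (Function.update μ' ((i : ℕ) : Fin (L + 1)) x)) *
          (e * TS.pMat L (fun _ => lam0) i ν
            (Function.update μ' ((i : ℕ) : Fin (L + 1)) x) μ)
        = (TS.F (μ' ((i - 1 : ℕ) : Fin (L + 1))) lam0 lam0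
              (μ' ((i + 1 : ℕ) : Fin (L + 1))) x ν *
            TS.Fbar (μ' ((i - 1 : ℕ) : Fin (L + 1))) lam0 lam0
              (μ' ((i + 1 : ℕ) : Fin (L + 1))) ν x) *
          (e * e * (TS.Fbar (μ' ((i - 1 : ℕ) : Fin (L + 1))) lam0 lam0
              (μ' ((i + 1 : ℕ) : Fin (L + 1))) ν (μ' ((i : ℕ) : Fin (L + 1))) *
            TS.F (μ' ((i - 1 : ℕ) : Fin (L + 1))) lam0 lam0
              (μ' ((i + 1 : ℕ) : Fin (L + 1))) (μ ((i : ℕ) : Fin (L + 1))) ν)) := by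
      intro x
      rw [TS.pMat_apply_out L lam0 ν hi1 hi2 μ' x]
      rw [TS.pMat_eq L lam0 ν i (Function.update μ' ((i : ℕ) : Fin (L + 1)) x) μ]
      rw [if_pos ((forall_erase_update L μ μ' x).2 hagree)]
      rw [Function.update_self, hμim, hμip]
      ring
    rw [finsum_congr hsummand]
    set sx := (TS.N_finite (μ' ((i - 1 : ℕ) : Fin (L + 1))) lam0).toFinset with hsx
    rw [finsum_eq_finset_sum _ sx ?hsupp]
    case hsupp =>
      intro x hx
      rw [hsx, Set.Finite.mem_toFinset]
      intro h0
      exact hx (by rw [TS.Fz1 h0, zero_mul, zero_mul])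
    rw [← Finset.sum_mul]
    have hsum : (∑ x ∈ sx, TS.F (μ' ((i - 1 : ℕ) : Fin (L + 1))) lam0 lam0
          (μ' ((i + 1 : ℕ) : Fin (L + 1))) x ν *
        TS.Fbar (μ' ((i - 1 : ℕ) : Fin (L + 1))) lam0 lam0
          (μ' ((i + 1 : ℕ) : Fin (L + 1))) ν x)
        = (TS.N (μ' ((i - 1 : ℕ) : Fin (L + 1))) ν (μ' ((i + 1 : ℕ) : Fin (L + 1))) : R) := by
      rw [← TS.rel1_sum lam0 ν hνν]
      symm
      apply finsum_eq_finset_sum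
      intro x hx
      rw [hsx, Set.Finite.mem_toFinset]
      intro h0
      exact hx (by rw [TS.Fz1 h0, zero_mul])
    rw [hsum, TS.pMat_eq L lam0 ν i μ' μ, if_pos hagree, hμim, hμip]
    by_cases hN0 : TS.N (μ' ((i - 1 : ℕ) : Fin (L + 1))) ν (μ' ((i + 1 : ℕ) : Fin (L + 1))) = 0
    · rw [TS.Fz3 hN0, hN0]
      push_cast
      ring
    · have hN1 : TS.N (μ' ((i - 1 : ℕ) : Fin (L + 1))) ν (μ' ((i + 1 : ℕ) : Fin (L + 1))) = 1 := by
        have := TS.N_le_one (μ' ((i - 1 : ℕ) : Fin (L + 1))) ν (μ' ((i + 1 : ℕ) : Fin (L + 1)))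
        omega
      rw [hN1]
      push_cast
      ring
  · -- disagreeing case : both sides vanish
    have hz : ∀ x : I,
        (e * TS.pMat L (fun _ => lam0) i ν μ'
            (Function.update μ' ((i : ℕ) : Fin (L + 1)) x)) *
          (e * TS.pMat L (fun _ => lam0) i ν
            (Function.update μ' ((i : ℕ) : Fin (L + 1)) x) μ) = 0 := by
      intro x
      rw [TS.pMat_eq L lam0 ν i (Function.update μ' ((i : ℕ) : Fin (L + 1)) x) μ]
      rw [if_neg (fun hcon => hagree ((forall_erase_update L μ μ' x).1 hcon))]
      ring
    rw [finsum_congr hz, finsum_zero, TS.pMat_eq L lam0 ν i μ' μ, if_neg hagree]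
    ring

end Rels

end TensorSystem

namespace TensorSystem

section Rels2

open Function

variable {R : Type*} [CommRing R] {I : Type*} (TS : TensorSystem R I)
variable (L : ℕ) (I0 : Set I) (lam0 ν : I)

lemma cond_swap {ii jj : Fin (L + 1)} (hne : ii ≠ jj) (μ μ' : Fin (L + 1) → I) :
    (∀ k ∈ Finset.univ.erase jj, μ k = Function.update μ' ii (μ ii) k)
      ↔ (∀ k : Fin (L + 1), k ≠ ii → k ≠ jj → μ k = μ' k) := by
  constructor
  · intro h k hki hkj
    have := h k (Finset.mem_erase.2 ⟨hkj, Finset.mem_univ _⟩)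
    rwa [Function.update_of_ne hki] at this
  · intro h k hk
    have hkj := (Finset.mem_erase.1 hk).1
    by_cases hki : k = ii
    · subst hki
      rw [Function.update_self]
    · rw [Function.update_of_ne hki]
      exact h k hki hkj

/-- one side of the commutation relation, evaluated. -/
lemma rel2_eval {i j : ℕ} (hi1 : 1 ≤ i) (hij : i + 2 ≤ j) (hjL : j + 1 ≤ L) (e : R)
    {μ' : Fin (L + 1) → I} (μ : Fin (L + 1) → I)
    (hμ' : TS.IsPath L I0 (fun _ => lam0) μ') :
    TS.mulMat L I0 (fun _ => lam0) (smulMat e (TS.pMat L (fun _ => lam0) i ν))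
        (smulMat e (TS.pMat L (fun _ => lam0) j ν)) μ' μ
      = (if ∀ k : Fin (L + 1), k ≠ ((i : ℕ) : Fin (L + 1)) →
            k ≠ ((j : ℕ) : Fin (L + 1)) → μ k = μ' k then (1:R) else 0)
        * (e * e)
        * (TS.Fbar (μ' ((i - 1 : ℕ) : Fin (L + 1))) lam0 lam0
            (μ' ((i + 1 : ℕ) : Fin (L + 1))) ν (μ' ((i : ℕ) : Fin (L + 1)))
          * TS.F (μ' ((i - 1 : ℕ) : Fin (L + 1))) lam0 lam0
            (μ' ((i + 1 : ℕ) : Fin (L + 1))) (μ ((i : ℕ) : Fin (L + 1))) ν)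
        * (TS.Fbar (μ ((j - 1 : ℕ) : Fin (L + 1))) lam0 lam0
            (μ ((j + 1 : ℕ) : Fin (L + 1))) ν (μ' ((j : ℕ) : Fin (L + 1)))
          * TS.F (μ ((j - 1 : ℕ) : Fin (L + 1))) lam0 lam0
            (μ ((j + 1 : ℕ) : Fin (L + 1))) (μ ((j : ℕ) : Fin (L + 1))) ν) := by
  classical
  have hne : ((i : ℕ) : Fin (L + 1)) ≠ ((j : ℕ) : Fin (L + 1)) :=
    fcast_ne (by omega) (by omega) (by omega)
  rw [TS.mul_collapse L I0 lam0 ν e _ μ hμ' hi1 (by omega)]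
  simp only [smulMat]
  rw [finsum_eq_single _ (μ ((i : ℕ) : Fin (L + 1))) ?hz]
  case hz =>
    intro x hx
    rw [TS.pMat_eq L lam0 ν j (Function.update μ' ((i : ℕ) : Fin (L + 1)) x) μ]
    rw [if_neg ?hc]
    · ring
    case hc =>
      intro hall
      have := hall ((i : ℕ) : Fin (L + 1)) (Finset.mem_erase.2 ⟨hne, Finset.mem_univ _⟩)
      rw [Function.update_self] at this
      exact hx this.symm
  rw [TS.pMat_apply_out L lam0 ν hi1 (by omega) μ' (μ ((i : ℕ) : Fin (L + 1)))]
  rw [TS.pMat_eq L lam0 ν j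
    (Function.update μ' ((i : ℕ) : Fin (L + 1)) (μ ((i : ℕ) : Fin (L + 1)))) μ]
  have hji : ((j : ℕ) : Fin (L + 1)) ≠ ((i : ℕ) : Fin (L + 1)) := hne.symm
  rw [Function.update_of_ne hji]
  by_cases hC : ∀ k : Fin (L + 1), k ≠ ((i : ℕ) : Fin (L + 1)) →
      k ≠ ((j : ℕ) : Fin (L + 1)) → μ k = μ' k
  · rw [if_pos ((cond_swap L hne μ μ').2 hC), if_pos hC]
    ring
  · rw [if_neg (fun hcon => hC ((cond_swap L hne μ μ').1 hcon)), if_neg hC]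
    ring

lemma rel2 {i j : ℕ} (hi1 : 1 ≤ i) (hij : i + 2 ≤ j) (hjL : j + 1 ≤ L) (e : R)
    {μ' : Fin (L + 1) → I} (μ : Fin (L + 1) → I)
    (hμ' : TS.IsPath L I0 (fun _ => lam0) μ') :
    TS.mulMat L I0 (fun _ => lam0) (smulMat e (TS.pMat L (fun _ => lam0) i ν))
        (smulMat e (TS.pMat L (fun _ => lam0) j ν)) μ' μ
      = TS.mulMat L I0 (fun _ => lam0) (smulMat e (TS.pMat L (fun _ => lam0) j ν))
        (smulMat e (TS.pMat L (fun _ => lam0) i ν)) μ' μ := by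
  classical
  -- the "swapped" evaluation : apply rel2_eval with roles exchanged
  have h1 := TS.rel2_eval L I0 lam0 ν hi1 hij hjL e μ hμ'
  -- second evaluation: collapse at site j first
  have hne : ((j : ℕ) : Fin (L + 1)) ≠ ((i : ℕ) : Fin (L + 1)) :=
    fcast_ne (by omega) (by omega) (by omega)
  have h2 : TS.mulMat L I0 (fun _ => lam0) (smulMat e (TS.pMat L (fun _ => lam0) j ν))
        (smulMat e (TS.pMat L (fun _ => lam0) i ν)) μ' μ
      = (if ∀ k : Fin (L + 1), k ≠ ((j : ℕ) : Fin (L + 1)) →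
            k ≠ ((i : ℕ) : Fin (L + 1)) → μ k = μ' k then (1:R) else 0)
        * (e * e)
        * (TS.Fbar (μ' ((j - 1 : ℕ) : Fin (L + 1))) lam0 lam0
            (μ' ((j + 1 : ℕ) : Fin (L + 1))) ν (μ' ((j : ℕ) : Fin (L + 1)))
          * TS.F (μ' ((j - 1 : ℕ) : Fin (L + 1))) lam0 lam0
            (μ' ((j + 1 : ℕ) : Fin (L + 1))) (μ ((j : ℕ) : Fin (L + 1))) ν)
        * (TS.Fbar (μ ((i - 1 : ℕ) : Fin (L + 1))) lam0 lam0
            (μ ((i + 1 : ℕ) : Fin (L + 1))) ν (μ' ((i : ℕ) : Fin (L + 1)))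
          * TS.F (μ ((i - 1 : ℕ) : Fin (L + 1))) lam0 lam0
            (μ ((i + 1 : ℕ) : Fin (L + 1))) (μ ((i : ℕ) : Fin (L + 1))) ν) := by
    rw [TS.mul_collapse L I0 lam0 ν e _ μ hμ' (by omega) hjL]
    simp only [smulMat]
    rw [finsum_eq_single _ (μ ((j : ℕ) : Fin (L + 1))) ?hz]
    case hz =>
      intro x hx
      rw [TS.pMat_eq L lam0 ν i (Function.update μ' ((j : ℕ) : Fin (L + 1)) x) μ]
      rw [if_neg ?hc]
      · ring
      case hc =>
        intro hall
        have := hall ((j : ℕ) : Fin (L + 1)) (Finset.mem_erase.2 ⟨hne, Finset.mem_univ _⟩)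
        rw [Function.update_self] at this
        exact hx this.symm
    rw [TS.pMat_apply_out L lam0 ν (by omega) hjL μ' (μ ((j : ℕ) : Fin (L + 1)))]
    rw [TS.pMat_eq L lam0 ν i
      (Function.update μ' ((j : ℕ) : Fin (L + 1)) (μ ((j : ℕ) : Fin (L + 1)))) μ]
    rw [Function.update_of_ne hne.symm]
    by_cases hC : ∀ k : Fin (L + 1), k ≠ ((j : ℕ) : Fin (L + 1)) →
        k ≠ ((i : ℕ) : Fin (L + 1)) → μ k = μ' k
    · rw [if_pos ((cond_swap L hne μ μ').2 hC), if_pos hC]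
      ring
    · rw [if_neg (fun hcon => hC ((cond_swap L hne μ μ').1 hcon)), if_neg hC]
      ring
  rw [h1, h2]
  -- now compare the two closed forms
  by_cases hC : ∀ k : Fin (L + 1), k ≠ ((i : ℕ) : Fin (L + 1)) →
      k ≠ ((j : ℕ) : Fin (L + 1)) → μ k = μ' k
  · have hC' : ∀ k : Fin (L + 1), k ≠ ((j : ℕ) : Fin (L + 1)) →
        k ≠ ((i : ℕ) : Fin (L + 1)) → μ k = μ' k := fun k h1 h2 => hC k h2 h1
    rw [if_pos hC, if_pos hC']
    have eim : μ ((i - 1 : ℕ) : Fin (L + 1)) = μ' ((i - 1 : ℕ) : Fin (L + 1)) :=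
      hC _ (fcast_ne (by omega) (by omega) (by omega))
        (fcast_ne (by omega) (by omega) (by omega))
    have eip : μ ((i + 1 : ℕ) : Fin (L + 1)) = μ' ((i + 1 : ℕ) : Fin (L + 1)) :=
      hC _ (fcast_ne (by omega) (by omega) (by omega))
        (fcast_ne (by omega) (by omega) (by omega))
    have ejm : μ ((j - 1 : ℕ) : Fin (L + 1)) = μ' ((j - 1 : ℕ) : Fin (L + 1)) :=
      hC _ (fcast_ne (by omega) (by omega) (by omega))
        (fcast_ne (by omega) (by omega) (by omega))
    have ejp : μ ((j + 1 : ℕ) : Fin (L + 1)) = μ' ((j + 1 : ℕ) : Fin (L + 1)) :=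
      hC _ (fcast_ne (by omega) (by omega) (by omega))
        (fcast_ne (by omega) (by omega) (by omega))
    rw [eim, eip, ejm, ejp]
    ring
  · have hC' : ¬ ∀ k : Fin (L + 1), k ≠ ((j : ℕ) : Fin (L + 1)) →
        k ≠ ((i : ℕ) : Fin (L + 1)) → μ k = μ' k := fun h => hC fun k h1 h2 => h k h2 h1
    rw [if_neg hC, if_neg hC']
    ring

end Rels2

end TensorSystem

namespace TensorSystem

section Rels3

open Function

variable {R : Type*} [CommRing R] {I : Type*} (TS : TensorSystem R I)
variable (L : ℕ) (I0 : Set I) (lam0 ν t₀ : I)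
variable (hνν : TS.N lam0 lam0 ν = 1)
variable (honeL : (∑ᶠ z, TS.N ν lam0 z) = 1) (honeR : (∑ᶠ z, TS.N lam0 ν z) = 1)
variable (hl : TS.N ν lam0 t₀ = 1) (hr : TS.N lam0 ν t₀ = 1)

lemma cond_swap2 {ii jj : Fin (L + 1)} (hne : jj ≠ ii) (μ μ' : Fin (L + 1) → I) (x : I) :
    (∀ k ∈ Finset.univ.erase ii,
        μ k = Function.update (Function.update μ' ii x) jj (μ jj) k)
      ↔ (∀ k : Fin (L + 1), k ≠ ii → k ≠ jj → μ k = μ' k) := by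
  constructor
  · intro h k hki hkj
    have := h k (Finset.mem_erase.2 ⟨hki, Finset.mem_univ _⟩)
    rwa [Function.update_of_ne hkj, Function.update_of_ne hki] at this
  · intro h k hk
    have hki := (Finset.mem_erase.1 hk).1
    by_cases hkj : k = jj
    · subst hkj
      rw [Function.update_self]
    · rw [Function.update_of_ne hkj, Function.update_of_ne hki]
      exact h k hki hkj

include hνν honeL honeR hl hr in
lemma rel3 (d : Rˣ)
    (hd : TS.F lam0 lam0 lam0 t₀ ν ν * TS.Fbar lam0 lam0 lam0 t₀ ν ν
      = ((d⁻¹ : Rˣ) : R) ^ 2)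
    {i : ℕ} (hi1 : 1 ≤ i) (hi2 : i + 2 ≤ L) {μ' μ : Fin (L + 1) → I}
    (hμ' : TS.IsPath L I0 (fun _ => lam0) μ') (hμ : TS.IsPath L I0 (fun _ => lam0) μ) :
    TS.mulMat L I0 (fun _ => lam0) (smulMat ((d : Rˣ) : R) (TS.pMat L (fun _ => lam0) i ν))
        (TS.mulMat L I0 (fun _ => lam0)
          (smulMat ((d : Rˣ) : R) (TS.pMat L (fun _ => lam0) (i + 1) ν))
          (smulMat ((d : Rˣ) : R) (TS.pMat L (fun _ => lam0) i ν))) μ' μ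
      = smulMat ((d : Rˣ) : R) (TS.pMat L (fun _ => lam0) i ν) μ' μ := by
  classical
  have him : ((i - 1 : ℕ) : Fin (L + 1)) ≠ ((i : ℕ) : Fin (L + 1)) :=
    fcast_ne (by omega) (by omega) (by omega)
  have hipi : ((i + 1 : ℕ) : Fin (L + 1)) ≠ ((i : ℕ) : Fin (L + 1)) :=
    fcast_ne (by omega) (by omega) (by omega)
  have hippip : ((i + 2 : ℕ) : Fin (L + 1)) ≠ ((i + 1 : ℕ) : Fin (L + 1)) :=
    fcast_ne (by omega) (by omega) (by omega)
  have hippi : ((i + 2 : ℕ) : Fin (L + 1)) ≠ ((i : ℕ) : Fin (L + 1)) :=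
    fcast_ne (by omega) (by omega) (by omega)
  have himip : ((i - 1 : ℕ) : Fin (L + 1)) ≠ ((i + 1 : ℕ) : Fin (L + 1)) :=
    fcast_ne (by omega) (by omega) (by omega)
  have harith : (i + 1 - 1 : ℕ) = i := by omega
  rw [TS.mul_collapse L I0 lam0 ν _ _ μ hμ' hi1 (by omega)]
  -- pointwise rewriting of the summand
  have hsummand : ∀ x : I,
      (((d : Rˣ) : R) * TS.pMat L (fun _ => lam0) i ν μ'
          (Function.update μ' ((i : ℕ) : Fin (L + 1)) x)) *
        TS.mulMat L I0 (fun _ => lam0)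
          (smulMat ((d : Rˣ) : R) (TS.pMat L (fun _ => lam0) (i + 1) ν))
          (smulMat ((d : Rˣ) : R) (TS.pMat L (fun _ => lam0) i ν))
          (Function.update μ' ((i : ℕ) : Fin (L + 1)) x) μ
      = (((d : Rˣ) : R) * TS.pMat L (fun _ => lam0) i ν μ'
          (Function.update μ' ((i : ℕ) : Fin (L + 1)) x)) *
        ((((d : Rˣ) : R) * TS.pMat L (fun _ => lam0) (i + 1) ν
            (Function.update μ' ((i : ℕ) : Fin (L + 1)) x)
            (Function.update (Function.update μ' ((i : ℕ) : Fin (L + 1)) x)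
              ((i + 1 : ℕ) : Fin (L + 1)) (μ ((i + 1 : ℕ) : Fin (L + 1))))) *
          (((d : Rˣ) : R) * TS.pMat L (fun _ => lam0) i ν
            (Function.update (Function.update μ' ((i : ℕ) : Fin (L + 1)) x)
              ((i + 1 : ℕ) : Fin (L + 1)) (μ ((i + 1 : ℕ) : Fin (L + 1)))) μ)) := by
    intro x
    by_cases hx0 : TS.pMat L (fun _ => lam0) i ν μ'
        (Function.update μ' ((i : ℕ) : Fin (L + 1)) x) = 0
    · rw [hx0]
      ring
    · congr 1
      have hpath : TS.IsPath L I0 (fun _ => lam0)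
          (Function.update μ' ((i : ℕ) : Fin (L + 1)) x) :=
        TS.pMat_ne_path L I0 lam0 ν hμ' hi1 (by omega) hx0
      rw [TS.mul_collapse L I0 lam0 ν _ _ μ hpath (by omega) (by omega)]
      rw [finsum_eq_single _ (μ ((i + 1 : ℕ) : Fin (L + 1))) ?hz]
      case hz =>
        intro y hy
        simp only [smulMat]
        rw [TS.pMat_eq L lam0 ν i
          (Function.update (Function.update μ' ((i : ℕ) : Fin (L + 1)) x)
            ((i + 1 : ℕ) : Fin (L + 1)) y) μ]
        rw [if_neg ?hcc]
        · ring
        case hcc =>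
          intro hall
          have := hall ((i + 1 : ℕ) : Fin (L + 1))
            (Finset.mem_erase.2 ⟨hipi, Finset.mem_univ _⟩)
          rw [Function.update_self] at this
          exact hy this.symm
      simp only [smulMat]
  rw [finsum_congr hsummand]
  simp only [smulMat]
  by_cases hC : ∀ k : Fin (L + 1), k ≠ ((i : ℕ) : Fin (L + 1)) →
      k ≠ ((i + 1 : ℕ) : Fin (L + 1)) → μ k = μ' k
  case neg =>
    -- everything vanishes
    have hz : ∀ x : I, (((d : Rˣ) : R) * TS.pMat L (fun _ => lam0) i ν μ'
          (Function.update μ' ((i : ℕ) : Fin (L + 1)) x)) *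
        ((((d : Rˣ) : R) * TS.pMat L (fun _ => lam0) (i + 1) ν
            (Function.update μ' ((i : ℕ) : Fin (L + 1)) x)
            (Function.update (Function.update μ' ((i : ℕ) : Fin (L + 1)) x)
              ((i + 1 : ℕ) : Fin (L + 1)) (μ ((i + 1 : ℕ) : Fin (L + 1))))) *
          (((d : Rˣ) : R) * TS.pMat L (fun _ => lam0) i ν
            (Function.update (Function.update μ' ((i : ℕ) : Fin (L + 1)) x)
              ((i + 1 : ℕ) : Fin (L + 1)) (μ ((i + 1 : ℕ) : Fin (L + 1)))) μ)) = 0 := by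
      intro x
      rw [TS.pMat_eq L lam0 ν i
        (Function.update (Function.update μ' ((i : ℕ) : Fin (L + 1)) x)
          ((i + 1 : ℕ) : Fin (L + 1)) (μ ((i + 1 : ℕ) : Fin (L + 1)))) μ]
      rw [if_neg (fun hcon => hC ((cond_swap2 L hipi μ μ' x).1 hcon))]
      ring
    rw [finsum_congr hz, finsum_zero, TS.pMat_eq L lam0 ν i μ' μ]
    rw [if_neg (fun hall => hC (fun k hki _ => hall k
      (Finset.mem_erase.2 ⟨hki, Finset.mem_univ _⟩)))]
    ring
  case pos =>
  have hμim : μ ((i - 1 : ℕ) : Fin (L + 1)) = μ' ((i - 1 : ℕ) : Fin (L + 1)) :=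
    hC _ him himip
  have hμipp : μ ((i + 2 : ℕ) : Fin (L + 1)) = μ' ((i + 2 : ℕ) : Fin (L + 1)) :=
    hC _ hippi hippip
  -- evaluate the three pMat factors
  have heval : ∀ x : I,
      (((d : Rˣ) : R) * TS.pMat L (fun _ => lam0) i ν μ'
          (Function.update μ' ((i : ℕ) : Fin (L + 1)) x)) *
        ((((d : Rˣ) : R) * TS.pMat L (fun _ => lam0) (i + 1) ν
            (Function.update μ' ((i : ℕ) : Fin (L + 1)) x)
            (Function.update (Function.update μ' ((i : ℕ) : Fin (L + 1)) x)
              ((i + 1 : ℕ) : Fin (L + 1)) (μ ((i + 1 : ℕ) : Fin (L + 1))))) *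
          (((d : Rˣ) : R) * TS.pMat L (fun _ => lam0) i ν
            (Function.update (Function.update μ' ((i : ℕ) : Fin (L + 1)) x)
              ((i + 1 : ℕ) : Fin (L + 1)) (μ ((i + 1 : ℕ) : Fin (L + 1)))) μ))
      = (((d : Rˣ) : R) * ((d : Rˣ) : R) * ((d : Rˣ) : R))
        * (TS.Fbar (μ' ((i - 1 : ℕ) : Fin (L + 1))) lam0 lam0
            (μ' ((i + 1 : ℕ) : Fin (L + 1))) ν (μ' ((i : ℕ) : Fin (L + 1)))
          * TS.F (μ' ((i - 1 : ℕ) : Fin (L + 1))) lam0 lam0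
            (μ ((i + 1 : ℕ) : Fin (L + 1))) (μ ((i : ℕ) : Fin (L + 1))) ν)
        * ((TS.F (μ' ((i - 1 : ℕ) : Fin (L + 1))) lam0 lam0
              (μ' ((i + 1 : ℕ) : Fin (L + 1))) x ν
            * TS.Fbar x lam0 lam0 (μ' ((i + 2 : ℕ) : Fin (L + 1))) ν
              (μ' ((i + 1 : ℕ) : Fin (L + 1))))
          * (TS.Fbar (μ' ((i - 1 : ℕ) : Fin (L + 1))) lam0 lam0
              (μ ((i + 1 : ℕ) : Fin (L + 1))) ν x
            * TS.F x lam0 lam0 (μ' ((i + 2 : ℕ) : Fin (L + 1)))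
              (μ ((i + 1 : ℕ) : Fin (L + 1))) ν)) := by
    intro x
    -- first factor
    rw [TS.pMat_apply_out L lam0 ν hi1 (by omega) μ' x]
    -- second factor : pMat at site i+1 applied to an update of (U x)
    rw [TS.pMat_apply_out L lam0 ν (by omega) (by omega)
      (Function.update μ' ((i : ℕ) : Fin (L + 1)) x) (μ ((i + 1 : ℕ) : Fin (L + 1)))]
    rw [harith]
    rw [Function.update_self]
    rw [Function.update_of_ne hippi, Function.update_of_ne hipi]
    -- third factor
    rw [TS.pMat_eq L lam0 ν i
      (Function.update (Function.update μ' ((i : ℕ) : Fin (L + 1)) x)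
        ((i + 1 : ℕ) : Fin (L + 1)) (μ ((i + 1 : ℕ) : Fin (L + 1)))) μ]
    rw [if_pos ((cond_swap2 L hipi μ μ' x).2 hC)]
    rw [show (Function.update (Function.update μ' ((i : ℕ) : Fin (L + 1)) x)
        ((i + 1 : ℕ) : Fin (L + 1)) (μ ((i + 1 : ℕ) : Fin (L + 1))))
        ((i : ℕ) : Fin (L + 1)) = x by
      rw [Function.update_of_ne hipi.symm, Function.update_self]]
    rw [hμim]
    ring
  rw [finsum_congr heval]
  -- now the scalar work
  have hMnu : ∀ x : I,
      TS.F (μ' ((i - 1 : ℕ) : Fin (L + 1))) lam0 lam0 (μ' ((i + 1 : ℕ) : Fin (L + 1))) x ν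
        * TS.Fbar x lam0 lam0 (μ' ((i + 2 : ℕ) : Fin (L + 1))) ν
            (μ' ((i + 1 : ℕ) : Fin (L + 1)))
      = TS.Fbar (μ' ((i - 1 : ℕ) : Fin (L + 1))) ν lam0 (μ' ((i + 2 : ℕ) : Fin (L + 1)))
          t₀ (μ' ((i + 1 : ℕ) : Fin (L + 1)))
        * TS.Fbar lam0 lam0 lam0 t₀ ν ν
        * TS.F (μ' ((i - 1 : ℕ) : Fin (L + 1))) lam0 ν (μ' ((i + 2 : ℕ) : Fin (L + 1)))
            x t₀ :=
    fun x => TS.Mnu lam0 ν t₀ hνν honeL honeR hl hr _ _ _ x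
  have hW1 : ∀ x : I,
      TS.Fbar (μ' ((i - 1 : ℕ) : Fin (L + 1))) lam0 lam0 (μ ((i + 1 : ℕ) : Fin (L + 1))) ν x
        * TS.F x lam0 lam0 (μ' ((i + 2 : ℕ) : Fin (L + 1)))
            (μ ((i + 1 : ℕ) : Fin (L + 1))) ν
      = TS.F (μ' ((i - 1 : ℕ) : Fin (L + 1))) ν lam0 (μ' ((i + 2 : ℕ) : Fin (L + 1)))
          (μ ((i + 1 : ℕ) : Fin (L + 1))) t₀
        * TS.F lam0 lam0 lam0 t₀ ν ν
        * TS.Fbar (μ' ((i - 1 : ℕ) : Fin (L + 1))) lam0 ν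
            (μ' ((i + 2 : ℕ) : Fin (L + 1))) t₀ x :=
    fun x => TS.W1 lam0 ν t₀ honeR hr _ _ _ ν x
  have hsum2 : (∑ᶠ x : I,
      (((d : Rˣ) : R) * ((d : Rˣ) : R) * ((d : Rˣ) : R))
        * (TS.Fbar (μ' ((i - 1 : ℕ) : Fin (L + 1))) lam0 lam0
            (μ' ((i + 1 : ℕ) : Fin (L + 1))) ν (μ' ((i : ℕ) : Fin (L + 1)))
          * TS.F (μ' ((i - 1 : ℕ) : Fin (L + 1))) lam0 lam0
            (μ ((i + 1 : ℕ) : Fin (L + 1))) (μ ((i : ℕ) : Fin (L + 1))) ν)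
        * ((TS.F (μ' ((i - 1 : ℕ) : Fin (L + 1))) lam0 lam0
              (μ' ((i + 1 : ℕ) : Fin (L + 1))) x ν
            * TS.Fbar x lam0 lam0 (μ' ((i + 2 : ℕ) : Fin (L + 1))) ν
              (μ' ((i + 1 : ℕ) : Fin (L + 1))))
          * (TS.Fbar (μ' ((i - 1 : ℕ) : Fin (L + 1))) lam0 lam0
              (μ ((i + 1 : ℕ) : Fin (L + 1))) ν x
            * TS.F x lam0 lam0 (μ' ((i + 2 : ℕ) : Fin (L + 1)))
              (μ ((i + 1 : ℕ) : Fin (L + 1))) ν)))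
      = (((d : Rˣ) : R) * ((d : Rˣ) : R) * ((d : Rˣ) : R))
        * (TS.Fbar (μ' ((i - 1 : ℕ) : Fin (L + 1))) lam0 lam0
            (μ' ((i + 1 : ℕ) : Fin (L + 1))) ν (μ' ((i : ℕ) : Fin (L + 1)))
          * TS.F (μ' ((i - 1 : ℕ) : Fin (L + 1))) lam0 lam0
            (μ ((i + 1 : ℕ) : Fin (L + 1))) (μ ((i : ℕ) : Fin (L + 1))) ν)
        * ((TS.F (μ' ((i - 1 : ℕ) : Fin (L + 1))) ν lam0
              (μ' ((i + 2 : ℕ) : Fin (L + 1))) (μ ((i + 1 : ℕ) : Fin (L + 1))) t₀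
            * TS.Fbar (μ' ((i - 1 : ℕ) : Fin (L + 1))) ν lam0
              (μ' ((i + 2 : ℕ) : Fin (L + 1))) t₀ (μ' ((i + 1 : ℕ) : Fin (L + 1))))
          * (TS.F lam0 lam0 lam0 t₀ ν ν * TS.Fbar lam0 lam0 lam0 t₀ ν ν)
          * (TS.N (μ' ((i - 1 : ℕ) : Fin (L + 1))) t₀
              (μ' ((i + 2 : ℕ) : Fin (L + 1))) : R)) := by
    rw [finsum_congr (fun x => by rw [hMnu x, hW1 x])]
    set sx := (TS.N_finite (μ' ((i - 1 : ℕ) : Fin (L + 1))) lam0).toFinset with hsx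
    rw [finsum_eq_finset_sum _ sx ?hsupp]
    case hsupp =>
      intro x hx
      rw [hsx, Set.Finite.mem_toFinset]
      intro h0
      exact hx (by rw [TS.Fz1 h0 ν _ t₀]; ring)
    have hstep : (∑ x ∈ sx,
        (((d : Rˣ) : R) * ((d : Rˣ) : R) * ((d : Rˣ) : R))
          * (TS.Fbar (μ' ((i - 1 : ℕ) : Fin (L + 1))) lam0 lam0
              (μ' ((i + 1 : ℕ) : Fin (L + 1))) ν (μ' ((i : ℕ) : Fin (L + 1)))
            * TS.F (μ' ((i - 1 : ℕ) : Fin (L + 1))) lam0 lam0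
              (μ ((i + 1 : ℕ) : Fin (L + 1))) (μ ((i : ℕ) : Fin (L + 1))) ν)
          * ((TS.Fbar (μ' ((i - 1 : ℕ) : Fin (L + 1))) ν lam0
                (μ' ((i + 2 : ℕ) : Fin (L + 1))) t₀ (μ' ((i + 1 : ℕ) : Fin (L + 1)))
              * TS.Fbar lam0 lam0 lam0 t₀ ν ν
              * TS.F (μ' ((i - 1 : ℕ) : Fin (L + 1))) lam0 ν
                  (μ' ((i + 2 : ℕ) : Fin (L + 1))) x t₀)
            * (TS.F (μ' ((i - 1 : ℕ) : Fin (L + 1))) ν lam0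
                (μ' ((i + 2 : ℕ) : Fin (L + 1))) (μ ((i + 1 : ℕ) : Fin (L + 1))) t₀
              * TS.F lam0 lam0 lam0 t₀ ν ν
              * TS.Fbar (μ' ((i - 1 : ℕ) : Fin (L + 1))) lam0 ν
                  (μ' ((i + 2 : ℕ) : Fin (L + 1))) t₀ x)))
        = ((((d : Rˣ) : R) * ((d : Rˣ) : R) * ((d : Rˣ) : R))
          * (TS.Fbar (μ' ((i - 1 : ℕ) : Fin (L + 1))) lam0 lam0
              (μ' ((i + 1 : ℕ) : Fin (L + 1))) ν (μ' ((i : ℕ) : Fin (L + 1)))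
            * TS.F (μ' ((i - 1 : ℕ) : Fin (L + 1))) lam0 lam0
              (μ ((i + 1 : ℕ) : Fin (L + 1))) (μ ((i : ℕ) : Fin (L + 1))) ν)
          * ((TS.F (μ' ((i - 1 : ℕ) : Fin (L + 1))) ν lam0
                (μ' ((i + 2 : ℕ) : Fin (L + 1))) (μ ((i + 1 : ℕ) : Fin (L + 1))) t₀
              * TS.Fbar (μ' ((i - 1 : ℕ) : Fin (L + 1))) ν lam0
                (μ' ((i + 2 : ℕ) : Fin (L + 1))) t₀ (μ' ((i + 1 : ℕ) : Fin (L + 1))))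
            * (TS.F lam0 lam0 lam0 t₀ ν ν * TS.Fbar lam0 lam0 lam0 t₀ ν ν)))
          * ∑ x ∈ sx, TS.F (μ' ((i - 1 : ℕ) : Fin (L + 1))) lam0 ν
              (μ' ((i + 2 : ℕ) : Fin (L + 1))) x t₀
            * TS.Fbar (μ' ((i - 1 : ℕ) : Fin (L + 1))) lam0 ν
              (μ' ((i + 2 : ℕ) : Fin (L + 1))) t₀ x := by
      rw [Finset.mul_sum]
      exact Finset.sum_congr rfl fun x _ => by ring
    rw [hstep]
    have hsum3 : (∑ x ∈ sx, TS.F (μ' ((i - 1 : ℕ) : Fin (L + 1))) lam0 ν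
          (μ' ((i + 2 : ℕ) : Fin (L + 1))) x t₀
        * TS.Fbar (μ' ((i - 1 : ℕ) : Fin (L + 1))) lam0 ν
          (μ' ((i + 2 : ℕ) : Fin (L + 1))) t₀ x)
        = (TS.N (μ' ((i - 1 : ℕ) : Fin (L + 1))) t₀
            (μ' ((i + 2 : ℕ) : Fin (L + 1))) : R) := by
      rw [← TS.relT_sum_r lam0 ν t₀ hr (μ' ((i - 1 : ℕ) : Fin (L + 1)))
        (μ' ((i + 2 : ℕ) : Fin (L + 1)))]
      symm
      apply finsum_eq_finset_sum
      intro x hx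
      rw [hsx, Set.Finite.mem_toFinset]
      intro h0
      exact hx (by rw [TS.Fz1 h0 ν _ t₀, zero_mul])
    rw [hsum3]
    ring
  rw [hsum2]
  rw [TS.ortho_nul lam0 ν t₀ honeL hl (μ' ((i - 1 : ℕ) : Fin (L + 1)))
    (μ' ((i + 2 : ℕ) : Fin (L + 1))) (μ ((i + 1 : ℕ) : Fin (L + 1)))
    (μ' ((i + 1 : ℕ) : Fin (L + 1)))]
  rw [hd, TS.pMat_eq L lam0 ν i μ' μ]
  by_cases hcc : μ ((i + 1 : ℕ) : Fin (L + 1)) = μ' ((i + 1 : ℕ) : Fin (L + 1))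
  · -- diagonal case
    have hifpos : ∀ j ∈ Finset.univ.erase ((i : ℕ) : Fin (L + 1)), μ j = μ' j := by
      intro k hk
      by_cases hkp : k = ((i + 1 : ℕ) : Fin (L + 1))
      · subst hkp; exact hcc
      · exact hC k (Finset.mem_erase.1 hk).1 hkp
    rw [if_pos hcc, if_pos hifpos, hμim, hcc]
    have hNcb : TS.N (μ' ((i + 1 : ℕ) : Fin (L + 1))) lam0
        (μ' ((i + 2 : ℕ) : Fin (L + 1))) = 1 := by
      have := TS.path_step L I0 lam0 hμ (j := i + 2) (by omega) (by omega)
      rw [show ((i + 2 - 1 : ℕ) : Fin (L + 1)) = ((i + 1 : ℕ) : Fin (L + 1)) by norm_num,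
        hcc, hμipp] at this
      exact this
    by_cases hNac : TS.N (μ' ((i - 1 : ℕ) : Fin (L + 1))) ν
        (μ' ((i + 1 : ℕ) : Fin (L + 1))) = 1
    · have hNat : TS.N (μ' ((i - 1 : ℕ) : Fin (L + 1))) t₀
          (μ' ((i + 2 : ℕ) : Fin (L + 1))) = 1 :=
        TS.N_assoc_l lam0 ν t₀ honeL hl hNac hNcb
      have hdd : ((d : Rˣ) : R) * ((d : Rˣ) : R) * ((d : Rˣ) : R) *
          ((d⁻¹ : Rˣ) : R) ^ 2 = ((d : Rˣ) : R) := by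
        have hu : ((d : Rˣ) : R) * ((d⁻¹ : Rˣ) : R) = 1 := by
          rw [← Units.val_mul, mul_inv_cancel, Units.val_one]
        calc ((d : Rˣ) : R) * ((d : Rˣ) : R) * ((d : Rˣ) : R) * ((d⁻¹ : Rˣ) : R) ^ 2
            = ((d : Rˣ) : R) * ((((d : Rˣ) : R) * ((d⁻¹ : Rˣ) : R)) *
              (((d : Rˣ) : R) * ((d⁻¹ : Rˣ) : R))) := by ring
          _ = ((d : Rˣ) : R) := by rw [hu]; ring
      rw [hNcb, hNat, hNac]
      linear_combination (TS.Fbar (μ' ((i - 1 : ℕ) : Fin (L + 1))) lam0 lam0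
          (μ' ((i + 1 : ℕ) : Fin (L + 1))) ν (μ' ((i : ℕ) : Fin (L + 1)))
        * TS.F (μ' ((i - 1 : ℕ) : Fin (L + 1))) lam0 lam0
          (μ' ((i + 1 : ℕ) : Fin (L + 1))) (μ ((i : ℕ) : Fin (L + 1))) ν) * hdd
    · have hNac0 : TS.N (μ' ((i - 1 : ℕ) : Fin (L + 1))) ν
          (μ' ((i + 1 : ℕ) : Fin (L + 1))) = 0 := by
        have := TS.N_le_one (μ' ((i - 1 : ℕ) : Fin (L + 1))) ν
          (μ' ((i + 1 : ℕ) : Fin (L + 1)))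
        omega
      rw [hcc] at *
      rw [TS.Fz3 hNac0, hNac0]
      push_cast
      ring
  · rw [if_neg hcc, if_neg (fun hall => hcc (hall _
      (Finset.mem_erase.2 ⟨hipi, Finset.mem_univ _⟩)))]
    ring

end Rels3

end TensorSystem

namespace TensorSystem

section Rels4

open Function

variable {R : Type*} [CommRing R] {I : Type*} (TS : TensorSystem R I)
variable (L : ℕ) (I0 : Set I) (lam0 ν t₀ : I)
variable (hνν : TS.N lam0 lam0 ν = 1)
variable (honeL : (∑ᶠ z, TS.N ν lam0 z) = 1) (honeR : (∑ᶠ z, TS.N lam0 ν z) = 1)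
variable (hl : TS.N ν lam0 t₀ = 1) (hr : TS.N lam0 ν t₀ = 1)

include hνν honeL honeR hl hr in
lemma rel4 (d : Rˣ)
    (hd : TS.F lam0 lam0 lam0 t₀ ν ν * TS.Fbar lam0 lam0 lam0 t₀ ν ν
      = ((d⁻¹ : Rˣ) : R) ^ 2)
    {i : ℕ} (hi1 : 2 ≤ i) (hi2 : i + 1 ≤ L) {μ' μ : Fin (L + 1) → I}
    (hμ' : TS.IsPath L I0 (fun _ => lam0) μ') (hμ : TS.IsPath L I0 (fun _ => lam0) μ) :
    TS.mulMat L I0 (fun _ => lam0) (smulMat ((d : Rˣ) : R) (TS.pMat L (fun _ => lam0) i ν))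
        (TS.mulMat L I0 (fun _ => lam0)
          (smulMat ((d : Rˣ) : R) (TS.pMat L (fun _ => lam0) (i - 1) ν))
          (smulMat ((d : Rˣ) : R) (TS.pMat L (fun _ => lam0) i ν))) μ' μ
      = smulMat ((d : Rˣ) : R) (TS.pMat L (fun _ => lam0) i ν) μ' μ := by
  classical
  have him : ((i - 1 : ℕ) : Fin (L + 1)) ≠ ((i : ℕ) : Fin (L + 1)) :=
    fcast_ne (by omega) (by omega) (by omega)
  have himm : ((i - 2 : ℕ) : Fin (L + 1)) ≠ ((i : ℕ) : Fin (L + 1)) :=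
    fcast_ne (by omega) (by omega) (by omega)
  have himmim : ((i - 2 : ℕ) : Fin (L + 1)) ≠ ((i - 1 : ℕ) : Fin (L + 1)) :=
    fcast_ne (by omega) (by omega) (by omega)
  have hipim : ((i + 1 : ℕ) : Fin (L + 1)) ≠ ((i - 1 : ℕ) : Fin (L + 1)) :=
    fcast_ne (by omega) (by omega) (by omega)
  have hipi : ((i + 1 : ℕ) : Fin (L + 1)) ≠ ((i : ℕ) : Fin (L + 1)) :=
    fcast_ne (by omega) (by omega) (by omega)
  have ha1 : (i - 1 - 1 : ℕ) = i - 2 := by omega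
  have ha2 : (i - 1 + 1 : ℕ) = i := by omega
  rw [TS.mul_collapse L I0 lam0 ν _ _ μ hμ' (by omega) hi2]
  have hsummand : ∀ x : I,
      (((d : Rˣ) : R) * TS.pMat L (fun _ => lam0) i ν μ'
          (Function.update μ' ((i : ℕ) : Fin (L + 1)) x)) *
        TS.mulMat L I0 (fun _ => lam0)
          (smulMat ((d : Rˣ) : R) (TS.pMat L (fun _ => lam0) (i - 1) ν))
          (smulMat ((d : Rˣ) : R) (TS.pMat L (fun _ => lam0) i ν))
          (Function.update μ' ((i : ℕ) : Fin (L + 1)) x) μ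
      = (((d : Rˣ) : R) * TS.pMat L (fun _ => lam0) i ν μ'
          (Function.update μ' ((i : ℕ) : Fin (L + 1)) x)) *
        ((((d : Rˣ) : R) * TS.pMat L (fun _ => lam0) (i - 1) ν
            (Function.update μ' ((i : ℕ) : Fin (L + 1)) x)
            (Function.update (Function.update μ' ((i : ℕ) : Fin (L + 1)) x)
              ((i - 1 : ℕ) : Fin (L + 1)) (μ ((i - 1 : ℕ) : Fin (L + 1))))) *
          (((d : Rˣ) : R) * TS.pMat L (fun _ => lam0) i ν
            (Function.update (Function.update μ' ((i : ℕ) : Fin (L + 1)) x)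
              ((i - 1 : ℕ) : Fin (L + 1)) (μ ((i - 1 : ℕ) : Fin (L + 1)))) μ)) := by
    intro x
    by_cases hx0 : TS.pMat L (fun _ => lam0) i ν μ'
        (Function.update μ' ((i : ℕ) : Fin (L + 1)) x) = 0
    · rw [hx0]
      ring
    · congr 1
      have hpath : TS.IsPath L I0 (fun _ => lam0)
          (Function.update μ' ((i : ℕ) : Fin (L + 1)) x) :=
        TS.pMat_ne_path L I0 lam0 ν hμ' (by omega) hi2 hx0
      rw [TS.mul_collapse L I0 lam0 ν _ _ μ hpath (by omega) (by omega)]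
      rw [finsum_eq_single _ (μ ((i - 1 : ℕ) : Fin (L + 1))) ?hz]
      case hz =>
        intro y hy
        simp only [smulMat]
        rw [TS.pMat_eq L lam0 ν i
          (Function.update (Function.update μ' ((i : ℕ) : Fin (L + 1)) x)
            ((i - 1 : ℕ) : Fin (L + 1)) y) μ]
        rw [if_neg ?hcc]
        · ring
        case hcc =>
          intro hall
          have := hall ((i - 1 : ℕ) : Fin (L + 1))
            (Finset.mem_erase.2 ⟨him, Finset.mem_univ _⟩)
          rw [Function.update_self] at this
          exact hy this.symm
      simp only [smulMat]
  rw [finsum_congr hsummand]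
  simp only [smulMat]
  by_cases hC : ∀ k : Fin (L + 1), k ≠ ((i : ℕ) : Fin (L + 1)) →
      k ≠ ((i - 1 : ℕ) : Fin (L + 1)) → μ k = μ' k
  case neg =>
    have hz : ∀ x : I, (((d : Rˣ) : R) * TS.pMat L (fun _ => lam0) i ν μ'
          (Function.update μ' ((i : ℕ) : Fin (L + 1)) x)) *
        ((((d : Rˣ) : R) * TS.pMat L (fun _ => lam0) (i - 1) ν
            (Function.update μ' ((i : ℕ) : Fin (L + 1)) x)
            (Function.update (Function.update μ' ((i : ℕ) : Fin (L + 1)) x)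
              ((i - 1 : ℕ) : Fin (L + 1)) (μ ((i - 1 : ℕ) : Fin (L + 1))))) *
          (((d : Rˣ) : R) * TS.pMat L (fun _ => lam0) i ν
            (Function.update (Function.update μ' ((i : ℕ) : Fin (L + 1)) x)
              ((i - 1 : ℕ) : Fin (L + 1)) (μ ((i - 1 : ℕ) : Fin (L + 1)))) μ)) = 0 := by
      intro x
      rw [TS.pMat_eq L lam0 ν i
        (Function.update (Function.update μ' ((i : ℕ) : Fin (L + 1)) x)
          ((i - 1 : ℕ) : Fin (L + 1)) (μ ((i - 1 : ℕ) : Fin (L + 1)))) μ]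
      rw [if_neg (fun hcon => hC ((cond_swap2 L him μ μ' x).1 hcon))]
      ring
    rw [finsum_congr hz, finsum_zero, TS.pMat_eq L lam0 ν i μ' μ]
    rw [if_neg (fun hall => hC (fun k hki _ => hall k
      (Finset.mem_erase.2 ⟨hki, Finset.mem_univ _⟩)))]
    ring
  case pos =>
  have hμimm : μ ((i - 2 : ℕ) : Fin (L + 1)) = μ' ((i - 2 : ℕ) : Fin (L + 1)) :=
    hC _ himm himmim
  have hμip : μ ((i + 1 : ℕ) : Fin (L + 1)) = μ' ((i + 1 : ℕ) : Fin (L + 1)) :=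
    hC _ hipi hipim
  have heval : ∀ x : I,
      (((d : Rˣ) : R) * TS.pMat L (fun _ => lam0) i ν μ'
          (Function.update μ' ((i : ℕ) : Fin (L + 1)) x)) *
        ((((d : Rˣ) : R) * TS.pMat L (fun _ => lam0) (i - 1) ν
            (Function.update μ' ((i : ℕ) : Fin (L + 1)) x)
            (Function.update (Function.update μ' ((i : ℕ) : Fin (L + 1)) x)
              ((i - 1 : ℕ) : Fin (L + 1)) (μ ((i - 1 : ℕ) : Fin (L + 1))))) *
          (((d : Rˣ) : R) * TS.pMat L (fun _ => lam0) i ν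
            (Function.update (Function.update μ' ((i : ℕ) : Fin (L + 1)) x)
              ((i - 1 : ℕ) : Fin (L + 1)) (μ ((i - 1 : ℕ) : Fin (L + 1)))) μ))
      = (((d : Rˣ) : R) * ((d : Rˣ) : R) * ((d : Rˣ) : R))
        * (TS.Fbar (μ' ((i - 1 : ℕ) : Fin (L + 1))) lam0 lam0
            (μ' ((i + 1 : ℕ) : Fin (L + 1))) ν (μ' ((i : ℕ) : Fin (L + 1)))
          * TS.F (μ ((i - 1 : ℕ) : Fin (L + 1))) lam0 lam0
            (μ' ((i + 1 : ℕ) : Fin (L + 1))) (μ ((i : ℕ) : Fin (L + 1))) ν)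
        * ((TS.F (μ' ((i - 2 : ℕ) : Fin (L + 1))) lam0 lam0 x
              (μ ((i - 1 : ℕ) : Fin (L + 1))) ν
            * TS.Fbar (μ ((i - 1 : ℕ) : Fin (L + 1))) lam0 lam0
              (μ' ((i + 1 : ℕ) : Fin (L + 1))) ν x)
          * (TS.Fbar (μ' ((i - 2 : ℕ) : Fin (L + 1))) lam0 lam0 x ν
              (μ' ((i - 1 : ℕ) : Fin (L + 1)))
            * TS.F (μ' ((i - 1 : ℕ) : Fin (L + 1))) lam0 lam0
              (μ' ((i + 1 : ℕ) : Fin (L + 1))) x ν)) := by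
    intro x
    rw [TS.pMat_apply_out L lam0 ν (by omega) hi2 μ' x]
    rw [TS.pMat_apply_out L lam0 ν (by omega) (by omega)
      (Function.update μ' ((i : ℕ) : Fin (L + 1)) x) (μ ((i - 1 : ℕ) : Fin (L + 1)))]
    rw [ha1, ha2]
    rw [Function.update_self]
    rw [Function.update_of_ne himm, Function.update_of_ne him]
    rw [TS.pMat_eq L lam0 ν i
      (Function.update (Function.update μ' ((i : ℕ) : Fin (L + 1)) x)
        ((i - 1 : ℕ) : Fin (L + 1)) (μ ((i - 1 : ℕ) : Fin (L + 1)))) μ]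
    rw [if_pos ((cond_swap2 L him μ μ' x).2 hC)]
    rw [show (Function.update (Function.update μ' ((i : ℕ) : Fin (L + 1)) x)
        ((i - 1 : ℕ) : Fin (L + 1)) (μ ((i - 1 : ℕ) : Fin (L + 1))))
        ((i : ℕ) : Fin (L + 1)) = x by
      rw [Function.update_of_ne him.symm, Function.update_self]]
    rw [hμip]
    ring
  rw [finsum_congr heval]
  have hMnu : ∀ x : I,
      TS.F (μ' ((i - 2 : ℕ) : Fin (L + 1))) lam0 lam0 x (μ ((i - 1 : ℕ) : Fin (L + 1))) ν
        * TS.Fbar (μ ((i - 1 : ℕ) : Fin (L + 1))) lam0 lam0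
            (μ' ((i + 1 : ℕ) : Fin (L + 1))) ν x
      = TS.Fbar (μ' ((i - 2 : ℕ) : Fin (L + 1))) ν lam0 (μ' ((i + 1 : ℕ) : Fin (L + 1)))
          t₀ x
        * TS.Fbar lam0 lam0 lam0 t₀ ν ν
        * TS.F (μ' ((i - 2 : ℕ) : Fin (L + 1))) lam0 ν (μ' ((i + 1 : ℕ) : Fin (L + 1)))
            (μ ((i - 1 : ℕ) : Fin (L + 1))) t₀ :=
    fun x => TS.Mnu lam0 ν t₀ hνν honeL honeR hl hr _ _ x _
  have hW1 : ∀ x : I,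
      TS.Fbar (μ' ((i - 2 : ℕ) : Fin (L + 1))) lam0 lam0 x ν
          (μ' ((i - 1 : ℕ) : Fin (L + 1)))
        * TS.F (μ' ((i - 1 : ℕ) : Fin (L + 1))) lam0 lam0
            (μ' ((i + 1 : ℕ) : Fin (L + 1))) x ν
      = TS.F (μ' ((i - 2 : ℕ) : Fin (L + 1))) ν lam0 (μ' ((i + 1 : ℕ) : Fin (L + 1))) x t₀
        * TS.F lam0 lam0 lam0 t₀ ν ν
        * TS.Fbar (μ' ((i - 2 : ℕ) : Fin (L + 1))) lam0 ν
            (μ' ((i + 1 : ℕ) : Fin (L + 1))) t₀ (μ' ((i - 1 : ℕ) : Fin (L + 1))) :=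
    fun x => TS.W1 lam0 ν t₀ honeR hr _ _ x ν _
  have hsum2 : (∑ᶠ x : I,
      (((d : Rˣ) : R) * ((d : Rˣ) : R) * ((d : Rˣ) : R))
        * (TS.Fbar (μ' ((i - 1 : ℕ) : Fin (L + 1))) lam0 lam0
            (μ' ((i + 1 : ℕ) : Fin (L + 1))) ν (μ' ((i : ℕ) : Fin (L + 1)))
          * TS.F (μ ((i - 1 : ℕ) : Fin (L + 1))) lam0 lam0
            (μ' ((i + 1 : ℕ) : Fin (L + 1))) (μ ((i : ℕ) : Fin (L + 1))) ν)
        * ((TS.F (μ' ((i - 2 : ℕ) : Fin (L + 1))) lam0 lam0 x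
              (μ ((i - 1 : ℕ) : Fin (L + 1))) ν
            * TS.Fbar (μ ((i - 1 : ℕ) : Fin (L + 1))) lam0 lam0
              (μ' ((i + 1 : ℕ) : Fin (L + 1))) ν x)
          * (TS.Fbar (μ' ((i - 2 : ℕ) : Fin (L + 1))) lam0 lam0 x ν
              (μ' ((i - 1 : ℕ) : Fin (L + 1)))
            * TS.F (μ' ((i - 1 : ℕ) : Fin (L + 1))) lam0 lam0
              (μ' ((i + 1 : ℕ) : Fin (L + 1))) x ν)))
      = (((d : Rˣ) : R) * ((d : Rˣ) : R) * ((d : Rˣ) : R))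
        * (TS.Fbar (μ' ((i - 1 : ℕ) : Fin (L + 1))) lam0 lam0
            (μ' ((i + 1 : ℕ) : Fin (L + 1))) ν (μ' ((i : ℕ) : Fin (L + 1)))
          * TS.F (μ ((i - 1 : ℕ) : Fin (L + 1))) lam0 lam0
            (μ' ((i + 1 : ℕ) : Fin (L + 1))) (μ ((i : ℕ) : Fin (L + 1))) ν)
        * ((TS.F (μ' ((i - 2 : ℕ) : Fin (L + 1))) lam0 ν
              (μ' ((i + 1 : ℕ) : Fin (L + 1))) (μ ((i - 1 : ℕ) : Fin (L + 1))) t₀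
            * TS.Fbar (μ' ((i - 2 : ℕ) : Fin (L + 1))) lam0 ν
              (μ' ((i + 1 : ℕ) : Fin (L + 1))) t₀ (μ' ((i - 1 : ℕ) : Fin (L + 1))))
          * (TS.F lam0 lam0 lam0 t₀ ν ν * TS.Fbar lam0 lam0 lam0 t₀ ν ν)
          * (TS.N (μ' ((i - 2 : ℕ) : Fin (L + 1))) t₀
              (μ' ((i + 1 : ℕ) : Fin (L + 1))) : R)) := by
    rw [finsum_congr (fun x => by rw [hMnu x, hW1 x])]
    set sx := (TS.N_finite (μ' ((i - 2 : ℕ) : Fin (L + 1))) ν).toFinset with hsx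
    rw [finsum_eq_finset_sum _ sx ?hsupp]
    case hsupp =>
      intro x hx
      rw [hsx, Set.Finite.mem_toFinset]
      intro h0
      exact hx (by rw [TS.Fbarz1 h0 lam0 _ t₀]; ring)
    have hstep : ∀ x ∈ sx, (((d : Rˣ) : R) * ((d : Rˣ) : R) * ((d : Rˣ) : R))
        * (TS.Fbar (μ' ((i - 1 : ℕ) : Fin (L + 1))) lam0 lam0
            (μ' ((i + 1 : ℕ) : Fin (L + 1))) ν (μ' ((i : ℕ) : Fin (L + 1)))
          * TS.F (μ ((i - 1 : ℕ) : Fin (L + 1))) lam0 lam0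
            (μ' ((i + 1 : ℕ) : Fin (L + 1))) (μ ((i : ℕ) : Fin (L + 1))) ν)
        * ((TS.Fbar (μ' ((i - 2 : ℕ) : Fin (L + 1))) ν lam0
              (μ' ((i + 1 : ℕ) : Fin (L + 1))) t₀ x
            * TS.Fbar lam0 lam0 lam0 t₀ ν ν
            * TS.F (μ' ((i - 2 : ℕ) : Fin (L + 1))) lam0 ν
                (μ' ((i + 1 : ℕ) : Fin (L + 1))) (μ ((i - 1 : ℕ) : Fin (L + 1))) t₀)
          * (TS.F (μ' ((i - 2 : ℕ) : Fin (L + 1))) ν lam0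
              (μ' ((i + 1 : ℕ) : Fin (L + 1))) x t₀
            * TS.F lam0 lam0 lam0 t₀ ν ν
            * TS.Fbar (μ' ((i - 2 : ℕ) : Fin (L + 1))) lam0 ν
                (μ' ((i + 1 : ℕ) : Fin (L + 1))) t₀ (μ' ((i - 1 : ℕ) : Fin (L + 1)))))
        = ((((d : Rˣ) : R) * ((d : Rˣ) : R) * ((d : Rˣ) : R))
          * (TS.Fbar (μ' ((i - 1 : ℕ) : Fin (L + 1))) lam0 lam0
              (μ' ((i + 1 : ℕ) : Fin (L + 1))) ν (μ' ((i : ℕ) : Fin (L + 1)))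
            * TS.F (μ ((i - 1 : ℕ) : Fin (L + 1))) lam0 lam0
              (μ' ((i + 1 : ℕ) : Fin (L + 1))) (μ ((i : ℕ) : Fin (L + 1))) ν)
          * ((TS.F (μ' ((i - 2 : ℕ) : Fin (L + 1))) lam0 ν
                (μ' ((i + 1 : ℕ) : Fin (L + 1))) (μ ((i - 1 : ℕ) : Fin (L + 1))) t₀
              * TS.Fbar (μ' ((i - 2 : ℕ) : Fin (L + 1))) lam0 ν
                (μ' ((i + 1 : ℕ) : Fin (L + 1))) t₀ (μ' ((i - 1 : ℕ) : Fin (L + 1))))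
            * (TS.F lam0 lam0 lam0 t₀ ν ν * TS.Fbar lam0 lam0 lam0 t₀ ν ν)))
          * (TS.F (μ' ((i - 2 : ℕ) : Fin (L + 1))) ν lam0
              (μ' ((i + 1 : ℕ) : Fin (L + 1))) x t₀
            * TS.Fbar (μ' ((i - 2 : ℕ) : Fin (L + 1))) ν lam0
              (μ' ((i + 1 : ℕ) : Fin (L + 1))) t₀ x) := fun x _ => by ring
    rw [Finset.sum_congr rfl hstep, ← Finset.mul_sum]
    have hsum3 : (∑ x ∈ sx, TS.F (μ' ((i - 2 : ℕ) : Fin (L + 1))) ν lam0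
          (μ' ((i + 1 : ℕ) : Fin (L + 1))) x t₀
        * TS.Fbar (μ' ((i - 2 : ℕ) : Fin (L + 1))) ν lam0
          (μ' ((i + 1 : ℕ) : Fin (L + 1))) t₀ x)
        = (TS.N (μ' ((i - 2 : ℕ) : Fin (L + 1))) t₀
            (μ' ((i + 1 : ℕ) : Fin (L + 1))) : R) := by
      rw [← TS.relT_sum_l lam0 ν t₀ hl (μ' ((i - 2 : ℕ) : Fin (L + 1)))
        (μ' ((i + 1 : ℕ) : Fin (L + 1)))]
      symm
      apply finsum_eq_finset_sum
      intro x hx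
      rw [hsx, Set.Finite.mem_toFinset]
      intro h0
      exact hx (by rw [TS.Fz1 h0 lam0 _ t₀, zero_mul])
    rw [hsum3]
    ring
  rw [hsum2]
  rw [TS.ortho_lnu lam0 ν t₀ honeR hr (μ' ((i - 2 : ℕ) : Fin (L + 1)))
    (μ' ((i + 1 : ℕ) : Fin (L + 1))) (μ ((i - 1 : ℕ) : Fin (L + 1)))
    (μ' ((i - 1 : ℕ) : Fin (L + 1)))]
  rw [hd, TS.pMat_eq L lam0 ν i μ' μ]
  by_cases hcc : μ ((i - 1 : ℕ) : Fin (L + 1)) = μ' ((i - 1 : ℕ) : Fin (L + 1))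
  · have hifpos : ∀ j ∈ Finset.univ.erase ((i : ℕ) : Fin (L + 1)), μ j = μ' j := by
      intro k hk
      by_cases hkp : k = ((i - 1 : ℕ) : Fin (L + 1))
      · subst hkp; exact hcc
      · exact hC k (Finset.mem_erase.1 hk).1 hkp
    rw [if_pos hcc, if_pos hifpos, hμip]
    have hNac : TS.N (μ' ((i - 2 : ℕ) : Fin (L + 1))) lam0
        (μ' ((i - 1 : ℕ) : Fin (L + 1))) = 1 := by
      have := TS.path_step L I0 lam0 hμ (j := i - 1) (by omega) (by omega)
      rw [show ((i - 1 - 1 : ℕ) : Fin (L + 1)) = ((i - 2 : ℕ) : Fin (L + 1)) by rw [ha1],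
        hcc, hμimm] at this
      exact this
    by_cases hNcb : TS.N (μ' ((i - 1 : ℕ) : Fin (L + 1))) ν
        (μ' ((i + 1 : ℕ) : Fin (L + 1))) = 1
    · have hNat : TS.N (μ' ((i - 2 : ℕ) : Fin (L + 1))) t₀
          (μ' ((i + 1 : ℕ) : Fin (L + 1))) = 1 :=
        TS.N_assoc_r lam0 ν t₀ honeR hr hNac hNcb
      have hdd : ((d : Rˣ) : R) * ((d : Rˣ) : R) * ((d : Rˣ) : R) *
          ((d⁻¹ : Rˣ) : R) ^ 2 = ((d : Rˣ) : R) := by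
        have hu : ((d : Rˣ) : R) * ((d⁻¹ : Rˣ) : R) = 1 := by
          rw [← Units.val_mul, mul_inv_cancel, Units.val_one]
        calc ((d : Rˣ) : R) * ((d : Rˣ) : R) * ((d : Rˣ) : R) * ((d⁻¹ : Rˣ) : R) ^ 2
            = ((d : Rˣ) : R) * ((((d : Rˣ) : R) * ((d⁻¹ : Rˣ) : R)) *
              (((d : Rˣ) : R) * ((d⁻¹ : Rˣ) : R))) := by ring
          _ = ((d : Rˣ) : R) := by rw [hu]; ring
      rw [hcc, hNac, hNcb, hNat]
      linear_combination (TS.Fbar (μ' ((i - 1 : ℕ) : Fin (L + 1))) lam0 lam0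
          (μ' ((i + 1 : ℕ) : Fin (L + 1))) ν (μ' ((i : ℕ) : Fin (L + 1)))
        * TS.F (μ' ((i - 1 : ℕ) : Fin (L + 1))) lam0 lam0
          (μ' ((i + 1 : ℕ) : Fin (L + 1))) (μ ((i : ℕ) : Fin (L + 1))) ν) * hdd
    · have hNcb0 : TS.N (μ' ((i - 1 : ℕ) : Fin (L + 1))) ν
          (μ' ((i + 1 : ℕ) : Fin (L + 1))) = 0 := by
        have := TS.N_le_one (μ' ((i - 1 : ℕ) : Fin (L + 1))) ν
          (μ' ((i + 1 : ℕ) : Fin (L + 1)))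
        omega
      rw [hcc, TS.Fz3 hNcb0, hNcb0]
      push_cast
      ring
  · rw [if_neg hcc, if_neg (fun hall => hcc (hall _
      (Finset.mem_erase.2 ⟨him, Finset.mem_univ _⟩)))]
    ring

end Rels4

end TensorSystem
/-- Temperley–Lieb relations for `U_i = d p_i^{(ν)}` on the
homogeneous chain `λ̃ = (λ, …, λ)` when `ν` acts one-dimensionally on `λ`. -/
theorem temperley_lieb_relations
    {R : Type*} [CommRing R] {I : Type*}
    (TS : TensorSystem R I) (lam0 ν : I)
    (honeL : TS.ActsOneDimLeft ν lam0) (honeR : TS.ActsOneDimRight ν lam0)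
    (hN : TS.N lam0 lam0 ν = 1)
    (φl φr : I) (hφl : TS.N ν lam0 φl = 1) (hφr : TS.N lam0 ν φr = 1)
    (d : Rˣ)
    (hd1 : ((d⁻¹ : Rˣ) : R) ^ 2
      = TS.F lam0 lam0 lam0 φl ν ν * TS.Fbar lam0 lam0 lam0 φl ν ν)
    (hd2 : ((d⁻¹ : Rˣ) : R) ^ 2
      = TS.F lam0 lam0 lam0 φr ν ν * TS.Fbar lam0 lam0 lam0 φr ν ν)
    (L : ℕ) (I0 : Set I) (hI0 : I0.Finite) :
    (∀ i : ℕ, 1 ≤ i → i + 1 ≤ L →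
      TS.MatEqOn L I0 (fun _ => lam0)
      (TS.mulMat L I0 (fun _ => lam0)
      (smulMat ((d : Rˣ) : R) (TS.pMat L (fun _ => lam0) (i) ν))
      (smulMat ((d : Rˣ) : R) (TS.pMat L (fun _ => lam0) (i) ν)))
      (smulMat ((d : Rˣ) : R) (smulMat ((d : Rˣ) : R) (TS.pMat L (fun _ => lam0) (i) ν))))
    ∧ (∀ i j : ℕ, 1 ≤ i → i + 2 ≤ j → j + 1 ≤ L →
      TS.MatEqOn L I0 (fun _ => lam0)
      (TS.mulMat L I0 (fun _ => lam0)
      (smulMat ((d : Rˣ) : R) (TS.pMat L (fun _ => lam0) (i) ν))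
      (smulMat ((d : Rˣ) : R) (TS.pMat L (fun _ => lam0) (j) ν)))
      (TS.mulMat L I0 (fun _ => lam0)
      (smulMat ((d : Rˣ) : R) (TS.pMat L (fun _ => lam0) (j) ν))
      (smulMat ((d : Rˣ) : R) (TS.pMat L (fun _ => lam0) (i) ν))))
    ∧ (∀ i : ℕ, 1 ≤ i → i + 2 ≤ L →
      TS.MatEqOn L I0 (fun _ => lam0)
      (TS.mulMat L I0 (fun _ => lam0)
      (smulMat ((d : Rˣ) : R) (TS.pMat L (fun _ => lam0) (i) ν))
      (TS.mulMat L I0 (fun _ => lam0)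
      (smulMat ((d : Rˣ) : R) (TS.pMat L (fun _ => lam0) (i + 1) ν))
      (smulMat ((d : Rˣ) : R) (TS.pMat L (fun _ => lam0) (i) ν))))
      (smulMat ((d : Rˣ) : R) (TS.pMat L (fun _ => lam0) (i) ν)))
    ∧ (∀ i : ℕ, 2 ≤ i → i + 1 ≤ L →
      TS.MatEqOn L I0 (fun _ => lam0)
      (TS.mulMat L I0 (fun _ => lam0)
      (smulMat ((d : Rˣ) : R) (TS.pMat L (fun _ => lam0) (i) ν))
      (TS.mulMat L I0 (fun _ => lam0)
      (smulMat ((d : Rˣ) : R) (TS.pMat L (fun _ => lam0) (i - 1) ν))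
      (smulMat ((d : Rˣ) : R) (TS.pMat L (fun _ => lam0) (i) ν))))
      (smulMat ((d : Rˣ) : R) (TS.pMat L (fun _ => lam0) (i) ν))) := by

  classical
  by_cases htriv : (1 : R) = 0
  · have hall : ∀ x y : R, x = y := fun x y => by
      calc x = x * 1 := (mul_one x).symm
        _ = x * 0 := by rw [htriv]
        _ = 0 := mul_zero x
        _ = y * 0 := (mul_zero y).symm
        _ = y * 1 := by rw [htriv]
        _ = y := mul_one y
    exact ⟨fun i _ _ μ' μ _ _ => hall _ _, fun i j _ _ _ μ' μ _ _ => hall _ _,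
      fun i _ _ μ' μ _ _ => hall _ _, fun i _ _ μ' μ _ _ => hall _ _⟩
  · have honeL' : (∑ᶠ z, TS.N ν lam0 z) = 1 := honeL
    have honeR' : (∑ᶠ z, TS.N lam0 ν z) = 1 := honeR
    have hne0 : TS.Fbar lam0 lam0 lam0 φr ν ν ≠ 0 := by
      intro h0
      apply htriv
      have hz : ((d⁻¹ : Rˣ) : R) ^ 2 = 0 := by rw [hd2, h0, mul_zero]
      have h1 : (1 : R) = ((d : Rˣ) : R) ^ 2 * ((d⁻¹ : Rˣ) : R) ^ 2 := by
        rw [← mul_pow, ← Units.val_mul, mul_inv_cancel, Units.val_one, one_pow]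
      rw [hz, mul_zero] at h1
      exact h1
    have hNνφr : TS.N ν lam0 φr = 1 := by
      by_contra h
      have h0 : TS.N ν lam0 φr = 0 := by have := TS.N_le_one ν lam0 φr; omega
      exact hne0 (TS.Fbarz4 h0 _ _ _)
    have hd : TS.F lam0 lam0 lam0 φr ν ν * TS.Fbar lam0 lam0 lam0 φr ν ν
        = ((d⁻¹ : Rˣ) : R) ^ 2 := hd2.symm
    refine ⟨?_, ?_, ?_, ?_⟩
    · intro i h1 h2 μ' μ hp' hp
      exact TS.rel1 L I0 lam0 ν hN h1 h2 _ μ hp'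
    · intro i j h1 h2 h3 μ' μ hp' hp
      exact TS.rel2 L I0 lam0 ν h1 h2 h3 _ μ hp'
    · intro i h1 h2 μ' μ hp' hp
      exact TS.rel3 L I0 lam0 ν φr hN honeL' honeR' hNνφr hφr d hd h1 h2 hp' hp
    · intro i h1 h2 μ' μ hp' hp
      exact TS.rel4 L I0 lam0 ν φr hN honeL' honeR' hNνφr hφr d hd h1 h2 hp' hp
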